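/- arXiv:math-ph/0509039 — 2 statements merged into one kernel-verified Lean document; each statement's English description precedes it below -/
import Mathlib

section
/- The operators H = Σ_{n≥1}[n²+βn(N−n)](p_n∂_{p_n}+p̃_n∂_{p̃_n}) + β Σ_{m,n≥1}[(m+n)p_m p_n ∂_{p_{m+n}} + 2m p_n p̃_m ∂_{p̃_{n+m}}] + Σ_{m,n≥1} mn[p_{m+n}∂_{p_n}∂_{p_m} + 2p̃_{n+m}∂_{p̃_m}∂_{p_n}] and I = Σ_{n≥0}(1−β) n p̃_n ∂_{p̃_n} + (β/2)Σ_{m,n≥0} p̃_m p̃_n ∂_{p̃_m}∂_{p̃_n} + Σ_{m≥0,n≥1}[n p̃_{m+n} ∂_{p̃_m} ∂_{p_n} + β p_n p̃_m ∂_{p̃_{m+n}}] are self-adjoint with respect to the combinatorial scalar product: ⟨⟨Hf|g⟩⟩_β = ⟨⟨f|Hg⟩⟩_β and ⟨⟨If|g⟩⟩_β = ⟨⟨f|Ig⟩⟩_β for all f, g in P(β). -/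
/-!
Common framework for "Orthogonality of Jack polynomials in superspace"
(Desrosiers–Lapointe–Mathieu).

We work over the field `F = ℚ(β)` of rational functions in the parameter `β`.
Superpartitions are encoded as a finset `a` of (distinct) fermionic parts
together with a multiset `s` of positive bosonic parts.
-/

noncomputable section

open scoped BigOperators

/-- The base field `ℚ(β)`. -/
abbrev F : Type := RatFunc ℚ

/-- The parameter `β`, the transcendental generator of `ℚ(β)`. -/
def βp : F := RatFunc.X

/-- The generalized binomial coefficient `C(β+k−1, k) = β(β+1)⋯(β+k−1)/k!`. -/
def binomβ (k : ℕ) : F := (∏ j ∈ Finset.range k, (βp + (j : F))) / (k.factorial : F)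

/-- The falling factorial `(a)_k = a(a−1)⋯(a−k+1)`. -/
def fallF (a : F) (k : ℕ) : F := ∏ j ∈ Finset.range k, (a - (j : F))

/-- Evaluation of a rational function in `β` at a rational number
(junk value at poles). -/
def evalQ (q : ℚ) (f : F) : ℚ := RatFunc.eval (RingHom.id ℚ) q f

/-! ### Partition combinatorics on multisets -/

/-- Sort a multiset of naturals in (weakly) decreasing order. -/
def sortD (M : Multiset ℕ) : List ℕ := (M.sort (· ≤ ·)).reverse

/-- `k`-th partial sum `λ₁ + ⋯ + λ_k` of the decreasing rearrangement. -/
def psum (M : Multiset ℕ) (k : ℕ) : ℕ := ((sortD M).take k).sum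

/-- Strip the zero parts. -/
def stripZ (M : Multiset ℕ) : Multiset ℕ := M.filter (fun v => 0 < v)

/-- Dominance order on partitions (of the same integer). -/
def domLE (M N : Multiset ℕ) : Prop := M.sum = N.sum ∧ ∀ k, psum M k ≤ psum N k

/-- Strict dominance order. -/
def domLT (M N : Multiset ℕ) : Prop := domLE M N ∧ stripZ M ≠ stripZ N

/-- The conjugate (transposed) partition: `λ'_j = #{i : λ_i ≥ j}`. -/
def conjM (M : Multiset ℕ) : Multiset ℕ :=
  (↑((List.range ((sortD M).headD 0)).map fun j =>
      Multiset.card (M.filter fun v => j < v)) : Multiset ℕ)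

/-! ### Superpartitions -/

/-- A superpartition `Λ = (Λ₁,…,Λ_m; Λ_{m+1},…,Λ_N)`: the fermionic parts
`Λ₁ > ⋯ > Λ_m ≥ 0` form a finset `a`, and the bosonic parts
`Λ_{m+1} ≥ ⋯ ≥ Λ_N ≥ 0` form a multiset `s` of positive integers
(trailing zero bosonic parts being immaterial). -/
structure SuperPartition where
  a : Finset ℕ
  s : Multiset ℕ
  hs : ∀ n ∈ s, 0 < n

namespace SuperPartition

instance : DecidableEq SuperPartition := Classical.decEq _

/-- The fermionic degree `m`. -/
def fdeg (Λ : SuperPartition) : ℕ := Λ.a.card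

/-- The bosonic degree `n = |Λ|`. -/
def bdeg (Λ : SuperPartition) : ℕ := (∑ k ∈ Λ.a, k) + Λ.s.sum

/-- The length `ℓ(Λ) = m + (number of nonzero parts of Λˢ)`. -/
def ell (Λ : SuperPartition) : ℕ := Λ.a.card + Multiset.card Λ.s

/-- The fermionic parts in decreasing order. -/
def sortedA (Λ : SuperPartition) : List ℕ := (Λ.a.sort (· ≤ ·)).reverse

/-- The bosonic parts in decreasing order. -/
def sortedS (Λ : SuperPartition) : List ℕ := (Λ.s.sort (· ≤ ·)).reverse

/-- All the parts `Λ₁,…,Λ_m,Λ_{m+1},…` in the standard order. -/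
def parts (Λ : SuperPartition) : List ℕ := Λ.sortedA ++ Λ.sortedS

/-- `n_Λ! = n_{Λˢ}(1)! n_{Λˢ}(2)! ⋯`, the product of the factorials of the
multiplicities of the bosonic parts. -/
def nfact (Λ : SuperPartition) : ℕ := ∏ i ∈ Λ.s.toFinset, (Λ.s.count i).factorial

/-- `z_{Λˢ} = ∏ i^{m_i} m_i!`. -/
def zs (Λ : SuperPartition) : ℕ := Λ.s.prod * Λ.nfact

/-- `z_Λ(γ) = γ^{−ℓ(Λ)} z_{Λˢ}` for a parameter `γ`. -/
def zgen (Λ : SuperPartition) (γ : F) : F := γ⁻¹ ^ Λ.ell * (Λ.zs : F)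

/-- `z_Λ(β) = β^{−ℓ(Λ)} z_{Λˢ}`. -/
def zβ (Λ : SuperPartition) : F := Λ.zgen βp

/-- The sign `(−1)^{m(m−1)/2}` (the effect of `↑` on a polynomial of
fermionic degree `m`). -/
def sgn (Λ : SuperPartition) : F := (-1 : F) ^ (Λ.fdeg * (Λ.fdeg - 1) / 2)

/-- `Λ*`: the multiset of all parts of `Λ`. -/
def star (Λ : SuperPartition) : Multiset ℕ := Λ.a.val + Λ.s

/-- The shape (row lengths) of the diagram `D[Λ]` *including* the circles:
each fermionic part contributes a row of length one more. -/
def circ (Λ : SuperPartition) : Multiset ℕ := Λ.a.val.map (· + 1) + Λ.s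

/-- `Λ*` as a decreasing list. -/
def starSorted (Λ : SuperPartition) : List ℕ := sortD Λ.star

end SuperPartition

/-- Bruhat order on superpartitions (of the same bidegree `(n|m)`):
`Ω ≤ Λ` iff `Λ* > Ω*` in dominance, or `Λ* = Ω*` and the circled shape of
`D[Λ]` dominates that of `D[Ω]`. -/
def bruhatLE (Ω Λ : SuperPartition) : Prop :=
  Ω.fdeg = Λ.fdeg ∧ Ω.bdeg = Λ.bdeg ∧
    (domLT Ω.star Λ.star ∨ (Ω.star = Λ.star ∧ domLE Ω.circ Λ.circ))

/-- Strict Bruhat order. -/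
def bruhatLT (Ω Λ : SuperPartition) : Prop := bruhatLE Ω Λ ∧ Ω ≠ Λ

/-- `Λc` is the conjugate `Λ'` of `Λ`: the diagram `D[Λc]` (circles included)
is the transpose of `D[Λ]`; equivalently both the star and the circled shape
get transposed. -/
def IsConjSP (Λ Λc : SuperPartition) : Prop :=
  stripZ Λc.star = conjM Λ.star ∧ Λc.circ = conjM Λ.circ

/-- The empty superpartition. -/
def SuperPartition.empty : SuperPartition :=
  ⟨∅, 0, fun n hn => absurd hn (Multiset.notMem_zero n)⟩

/-- The one-row superpartition `(n)` (a single bosonic part `n`). -/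
def bRow (n : ℕ) : SuperPartition :=
  ⟨∅, Multiset.filter (fun v => 0 < v) {n}, fun k hk => (Multiset.mem_filter.mp hk).2⟩

/-- The one-row superpartition `(k; 0)` (a single fermionic part `k`). -/
def fRow (k : ℕ) : SuperPartition := ⟨{k}, 0, fun n hn => absurd hn (Multiset.notMem_zero n)⟩
/-! ### Infinite sums and products of superfunctions -/

/-- `L` is the value of the infinite (ordered) product `∏_{i≥1} f i`
of a sequence in a (possibly noncommutative) topological ring. -/
def IsProdLimit {A : Type} [Ring A] [TopologicalSpace A] (f : ℕ → A) (L : A) : Prop :=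
  Filter.Tendsto (fun n => ((List.range n).map f).prod) Filter.atTop (nhds L)

section Generic

variable {A : Type} {ι : Type}

/-- The binomial series `(1 − v)^{−β} = ∑_k C(β+k−1,k) v^k`. -/
def invβSeries [Ring A] [Algebra F A] [TopologicalSpace A] (v : A) : A :=
  ∑' k : ℕ, binomβ k • v ^ k

/-- The geometric series `(1 − v)^{−1} = ∑_k v^k`. -/
def geomSeries [Ring A] [TopologicalSpace A] (v : A) : A := ∑' k : ℕ, v ^ k

/-- The bosonic power sum `p_n = ∑_i x_i^n`. -/
def pbGen [Ring A] [TopologicalSpace A] (x : ι → A) (n : ℕ) : A := ∑' i, x i ^ n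

/-- The fermionic power sum `p̃_k = ∑_i θ_i x_i^k`. -/
def pfGen [Ring A] [TopologicalSpace A] (x θ : ι → A) (k : ℕ) : A := ∑' i, θ i * x i ^ k

/-- For a multiplicative family (`gb` in the bosonic rows, `gf` in the
fermionic rows), the product
`f_Λ = f̃_{Λ₁} ⋯ f̃_{Λ_m} f_{Λ_{m+1}} ⋯ f_{Λ_N}`. -/
def prodRows [Ring A] (gb gf : ℕ → A) (Λ : SuperPartition) : A :=
  (Λ.sortedA.map gf).prod * (Λ.sortedS.map gb).prod

/-- The power sum `p_Λ = p̃_{Λ₁} ⋯ p̃_{Λ_m} p_{Λ_{m+1}} ⋯ p_{Λ_N}`. -/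
def pPGen [Ring A] [TopologicalSpace A] (x θ : ι → A) (Λ : SuperPartition) : A :=
  prodRows (pbGen x) (pfGen x θ) Λ

/-- The supermonomial `m_Λ`: the sum of all distinct terms
`θ_{σ(1)} ⋯ θ_{σ(m)} x_{σ(1)}^{Λ₁} ⋯ x_{σ(N)}^{Λ_N}`; realized as
`(n_Λ!)⁻¹` times the sum over all injections of the rows into the variables. -/
def mPGen [Ring A] [Algebra F A] [TopologicalSpace A] (x θ : ι → A)
    (Λ : SuperPartition) : A :=
  ((Λ.nfact : F))⁻¹ •
    ∑' e : Fin Λ.parts.length ↪ ι,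
      ((((List.finRange Λ.parts.length).filter fun (i : Fin Λ.parts.length) => ((i : ℕ) < Λ.fdeg)).map
          fun i => θ (e i)).prod *
        (((List.finRange Λ.parts.length).map fun i => x (e i) ^ Λ.parts.get i).prod))

/-- A pair `(t, τ)` of formal parameters: `t` is even (commutes with
everything) and `τ` is an odd (Grassmannian) parameter, `τ² = 0`, commuting
with the bosonic variables and anticommuting with the fermionic ones. -/
structure OddParam [Ring A] (x θ : ι → A) where
  t : A
  τ : A
  ht : ∀ b : A, t * b = b * t
  hττ : τ * τ = 0
  hτt : τ * t = t * τ
  hτx : ∀ i, τ * x i = x i * τ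
  hτθ : ∀ i, τ * θ i = -(θ i * τ)

/-- `g_n, g̃_n` are given by the generating series
`∏_{i≥1} (1 − t x_i − τ θ_i)^{−β} = ∑_n t^n (g_n + τ g̃_n)`,
for all admissible formal parameter pairs `(t,τ)` (parameters are tested
against the full variable family `(xa, θa)`, the product being over the
family `(xv, θv)`). -/
def GenβBy [Ring A] [Algebra F A] [TopologicalSpace A] (xa θa : ι → A)
    (xv θv : ℕ → A) (g gt : ℕ → A) : Prop :=
  ∀ pp : OddParam xa θa,
    IsProdLimit (fun i => invβSeries (pp.t * xv i + pp.τ * θv i))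
      (∑' n : ℕ, pp.t ^ n * (g n + pp.τ * gt n))

/-- `h_n, h̃_n` are given by the generating series
`∏_{i≥1} (1 − t x_i − τ θ_i)^{−1} = ∑_n t^n (h_n + τ h̃_n)`. -/
def GenGeomBy [Ring A] [TopologicalSpace A] (xa θa : ι → A)
    (xv θv : ℕ → A) (h ht : ℕ → A) : Prop :=
  ∀ pp : OddParam xa θa,
    IsProdLimit (fun i => geomSeries (pp.t * xv i + pp.τ * θv i))
      (∑' n : ℕ, pp.t ^ n * (h n + pp.τ * ht n))

/-- `e_n, ẽ_n` are given by the generating series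
`∏_{i≥1} (1 + t x_i + τ θ_i) = ∑_n t^n (e_n + τ ẽ_n)`. -/
def GenElemBy [Ring A] [TopologicalSpace A] (xa θa : ι → A)
    (xv θv : ℕ → A) (e et : ℕ → A) : Prop :=
  ∀ pp : OddParam xa θa,
    IsProdLimit (fun i => 1 + pp.t * xv i + pp.τ * θv i)
      (∑' n : ℕ, pp.t ^ n * (e n + pp.τ * et n))

/-- In `N` variables: `g_n, g̃_n` given by the (finite) generating product
`∏_{i=1}^N (1 − t x_i − τ θ_i)^{−β} = ∑_n t^n (g_n + τ g̃_n)`. -/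
def GenβFin [Ring A] [Algebra F A] [TopologicalSpace A] {N : ℕ}
    (xa θa : Fin N → A) (g gt : ℕ → A) : Prop :=
  ∀ pp : OddParam xa θa,
    (((List.finRange N).map fun i => invβSeries (pp.t * xa i + pp.τ * θa i)).prod
      = ∑' n : ℕ, pp.t ^ n * (g n + pp.τ * gt n))

end Generic

/-! ### Variables in superspace -/

/-- An (abstract, completed) ring of functions in superspace containing
infinitely many commuting variables `x_i` and anticommuting variables `θ_i`. -/
structure SuperVars (A : Type) [Ring A] where
  x : ℕ → A
  θ : ℕ → A
  hxx : ∀ i j, x i * x j = x j * x i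
  hxθ : ∀ i j, x i * θ j = θ j * x i
  hθθ : ∀ i j, θ i * θ j = -(θ j * θ i)

/-- Two sets of variables in superspace `(x, θ)` and `(y, φ)` inside one
ambient ring; all bosonic variables commute with everything, and all
fermionic variables mutually anticommute. -/
structure SuperVars2 (A : Type) [Ring A] where
  x : ℕ → A
  y : ℕ → A
  θ : ℕ → A
  φ : ℕ → A
  hxx : ∀ i j, x i * x j = x j * x i
  hyy : ∀ i j, y i * y j = y j * y i
  hxy : ∀ i j, x i * y j = y j * x i
  hxθ : ∀ i j, x i * θ j = θ j * x i
  hxφ : ∀ i j, x i * φ j = φ j * x i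
  hyθ : ∀ i j, y i * θ j = θ j * y i
  hyφ : ∀ i j, y i * φ j = φ j * y i
  hθθ : ∀ i j, θ i * θ j = -(θ j * θ i)
  hθφ : ∀ i j, θ i * φ j = -(φ j * θ i)
  hφφ : ∀ i j, φ i * φ j = -(φ j * φ i)
/-! ### The free module on power sums, and the operators H, I -/

/-- `P(β)` presented through its power-sum coordinates: the free `F`-module
with basis `{p_Λ}` indexed by superpartitions. -/
abbrev PS : Type := SuperPartition →₀ F

/-- The basis vector `p_Λ`. -/
def pUnit (Λ : SuperPartition) : PS := Finsupp.single Λ 1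

/-- Lift of a map defined on the basis `{p_Λ}` to a linear endomorphism. -/
def liftP (g : SuperPartition → PS) : PS →ₗ[F] PS :=
  Finsupp.linearCombination F g

namespace SuperPartition

/-- Adjoin a bosonic part `n ≥ 1`. -/
def addB (n : ℕ) (Λ : SuperPartition) : SuperPartition :=
  if h : 0 < n then
    ⟨Λ.a, n ::ₘ Λ.s, fun k hk => by
      rcases Multiset.mem_cons.mp hk with h' | h'
      · exact h' ▸ h
      · exact Λ.hs k h'⟩
  else Λ

/-- Remove one bosonic part `n`. -/
def eraseB (n : ℕ) (Λ : SuperPartition) : SuperPartition :=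
  ⟨Λ.a, Λ.s.erase n, fun k hk => Λ.hs k (Multiset.mem_of_mem_erase hk)⟩

/-- Adjoin a fermionic part `k`. -/
def addF (k : ℕ) (Λ : SuperPartition) : SuperPartition := ⟨insert k Λ.a, Λ.s, Λ.hs⟩

/-- Remove the fermionic part `k`. -/
def eraseF (k : ℕ) (Λ : SuperPartition) : SuperPartition := ⟨Λ.a.erase k, Λ.s, Λ.hs⟩

/-- The sign `(−1)^{#{j ∈ Λᵃ : j > k}}` produced when the odd generator
`p̃_k` is moved to its position in `p_Λ`. -/
def fsgn (k : ℕ) (Λ : SuperPartition) : F := (-1 : F) ^ (Λ.a.filter (fun j => k < j)).card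

end SuperPartition

open SuperPartition in
/-- Multiplication by the bosonic power sum `p_n`. -/
def opP (n : ℕ) : PS →ₗ[F] PS := liftP fun Λ => pUnit (addB n Λ)

open SuperPartition in
/-- The derivation `∂/∂p_n`. -/
def opDP (n : ℕ) : PS →ₗ[F] PS :=
  liftP fun Λ => (Λ.s.count n : F) • pUnit (eraseB n Λ)

open SuperPartition in
/-- (Left) multiplication by the fermionic power sum `p̃_k`. -/
def opPt (k : ℕ) : PS →ₗ[F] PS :=
  liftP fun Λ => if k ∈ Λ.a then 0 else fsgn k Λ • pUnit (addF k Λ)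

open SuperPartition in
/-- The odd derivation `∂/∂p̃_k`. -/
def opDPt (k : ℕ) : PS →ₗ[F] PS :=
  liftP fun Λ => if k ∈ Λ.a then fsgn k Λ • pUnit (eraseF k Λ) else 0

/-- The operator
`H = ∑_{n≥1} [n² + βn(N−n)] (p_n ∂_{p_n} + p̃_n ∂_{p̃_n})
 + β ∑_{m,n≥1} [(m+n) p_m p_n ∂_{p_{m+n}} + 2m p_n p̃_m ∂_{p̃_{n+m}}]
 + ∑_{m,n≥1} mn [p_{m+n} ∂_{p_n} ∂_{p_m} + 2 p̃_{n+m} ∂_{p̃_m} ∂_{p_n}]`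
(each sum is finite on any fixed `p_Λ`; it is truncated at the bosonic
degree of `Λ`, beyond which all terms vanish). -/
def Hop9 (Ncst : F) : PS →ₗ[F] PS := liftP fun Λ =>
  (∑ n ∈ Finset.Icc 1 Λ.bdeg,
      ((n : F) ^ 2 + βp * (n : F) * (Ncst - (n : F))) •
        (opP n (opDP n (pUnit Λ)) + opPt n (opDPt n (pUnit Λ))))
  + βp • (∑ m ∈ Finset.Icc 1 Λ.bdeg, ∑ n ∈ Finset.Icc 1 Λ.bdeg,
      (((m + n : ℕ) : F) • opP m (opP n (opDP (m + n) (pUnit Λ)))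
        + (2 * (m : F)) • opP n (opPt m (opDPt (n + m) (pUnit Λ)))))
  + (∑ m ∈ Finset.Icc 1 Λ.bdeg, ∑ n ∈ Finset.Icc 1 Λ.bdeg,
      ((m : F) * (n : F)) •
        (opP (m + n) (opDP n (opDP m (pUnit Λ)))
          + (2 : F) • opPt (n + m) (opDPt m (opDP n (pUnit Λ)))))

/-- The operator
`I = ∑_{n≥0} (1−β) n p̃_n ∂_{p̃_n} + (β/2) ∑_{m,n≥0} p̃_m p̃_n ∂_{p̃_m} ∂_{p̃_n}
 + ∑_{m≥0,n≥1} [n p̃_{m+n} ∂_{p̃_m} ∂_{p_n} + β p_n p̃_m ∂_{p̃_{m+n}}]`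
(truncated at the bosonic degree, beyond which all terms vanish). -/
def Iop9 : PS →ₗ[F] PS := liftP fun Λ =>
  (∑ n ∈ Finset.range (Λ.bdeg + 1), ((1 - βp) * (n : F)) • opPt n (opDPt n (pUnit Λ)))
  + (βp / 2) • (∑ m ∈ Finset.range (Λ.bdeg + 1), ∑ n ∈ Finset.range (Λ.bdeg + 1),
      opPt m (opPt n (opDPt m (opDPt n (pUnit Λ)))))
  + (∑ m ∈ Finset.range (Λ.bdeg + 1), ∑ n ∈ Finset.Icc 1 Λ.bdeg,
      ((n : F) • opPt (m + n) (opDPt m (opDP n (pUnit Λ)))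
        + βp • opP n (opPt m (opDPt (m + n) (pUnit Λ)))))

/-- The combinatorial scalar product `⟨⟨·|·⟩⟩_β` in power-sum coordinates:
`⟨⟨p_Λ | p_Ω⟩⟩_β = (−1)^{m(m−1)/2} z_Λ(β) δ_{Λ,Ω}`. -/
def spF (f g : PS) : F := f.sum fun Λ c => c * g Λ * (Λ.sgn * Λ.zβ)

/-! ### Abstract model of the ring of symmetric superfunctions -/

section Abstract

variable {P : Type} [AddCommGroup P] [Module F P]

/-- The combinatorial scalar product with parameter `γ` on a module with a
distinguished power-sum basis `pB`:
`⟨⟨p_Λ | p_Ω⟩⟩ = (−1)^{m(m−1)/2} z_Λ(γ) δ_{Λ,Ω}`. -/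
def spGen (pB : Module.Basis SuperPartition F P) (γ : F) (f g : P) : F :=
  (pB.repr f).sum fun Λ c => c * (pB.repr g) Λ * (Λ.sgn * Λ.zgen γ)

/-- `J` is monic and (strictly) upper triangular in the basis `mB` with
respect to the Bruhat order: `J_Λ = m_Λ + ∑_{Ω < Λ} c_{ΛΩ} m_Ω`. -/
def IsMonicTriangular (mB : Module.Basis SuperPartition F P) (J : SuperPartition → P) : Prop :=
  ∀ Λ, (mB.repr (J Λ)) Λ = 1 ∧ ∀ Ω, (mB.repr (J Λ)) Ω ≠ 0 → Ω = Λ ∨ bruhatLT Ω Λ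

/-- The operator `H` transported to the abstract model via the power-sum
basis. -/
def HopB (pB : Module.Basis SuperPartition F P) (Ncst : F) : P →ₗ[F] P :=
  (pB.repr.symm.toLinearMap.comp (Hop9 Ncst)).comp pB.repr.toLinearMap

/-- The operator `I` transported to the abstract model via the power-sum
basis. -/
def IopB (pB : Module.Basis SuperPartition F P) : P →ₗ[F] P :=
  (pB.repr.symm.toLinearMap.comp Iop9).comp pB.repr.toLinearMap

end Abstract

/-! ### Eigenvalues of the Calogero–Moser–Sutherland operators -/

/-- `ε_Λ(γ) = ∑_{j=1}^N [(Λ*_j)² + γ(N+1−2j) Λ*_j]`. -/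
def epsVal (N : ℕ) (Λ : SuperPartition) (γ : F) : F :=
  ∑ j ∈ Finset.range N,
    (((Λ.starSorted.getD j 0 : ℕ) : F) ^ 2
      + γ * (((N : F) + 1) - 2 * ((j : F) + 1)) * ((Λ.starSorted.getD j 0 : ℕ) : F))

/-- `ε̃_Λ(γ) = |Λᵃ| − γ |(Λ')ᵃ| − γ m(m−1)/2`, where `Λc = Λ'`. -/
def epsTVal (Λ Λc : SuperPartition) (γ : F) : F :=
  ((∑ k ∈ Λ.a, k : ℕ) : F) - γ * ((∑ k ∈ Λc.a, k : ℕ) : F)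
    - γ * ((Λ.fdeg * (Λ.fdeg - 1) / 2 : ℕ) : F)
/-! ### Dunkl–Cherednik operators in `N` variables -/

/-- A system of `N` superspace variables `(x, θ)` inside an ambient
(completed) ring `A`, together with the operator data entering the
Dunkl–Cherednik operators: the partial derivatives `∂_{x_j}`, the exchange
operators `K_{jk}` (acting on the `x`'s only), the divided-difference pieces
`O_{jk} = (x_{max(j,k) or j}/(x_j − x_k))(1 − K_{jk})`, the simultaneous
exchange operators `𝒦_σ` (acting on `x`'s and `θ`'s), and the projection
`θ₁ ∂_{θ₁}`.  The set `extra` consists of the remaining generators of the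
ambient ring (e.g. a second set of variables), which all these operators
leave untouched. -/
structure DunklSystem (N : ℕ) (A : Type) [Ring A] [Algebra F A]
    [TopologicalSpace A] [IsTopologicalRing A] where
  hN : 0 < N
  x : Fin N → A
  θ : Fin N → A
  extra : Set A
  hxx : ∀ i j, x i * x j = x j * x i
  hxθ : ∀ i j, x i * θ j = θ j * x i
  hθθ : ∀ i j, θ i * θ j = -(θ j * θ i)
  -- the partial derivatives ∂_{x_j}
  pdx : Fin N → Module.End F A
  hpdx_mul : ∀ j f g, pdx j (f * g) = pdx j f * g + f * pdx j g
  hpdx_x : ∀ j k, pdx j (x k) = if j = k then 1 else 0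
  hpdx_θ : ∀ j k, pdx j (θ k) = 0
  hpdx_extra : ∀ j b, b ∈ extra → pdx j b = 0
  hpdx_cont : ∀ j, Continuous (pdx j)
  -- the exchange operators K_{jk} (on the x's only)
  Kx : Fin N → Fin N → (A →ₐ[F] A)
  hKx_x : ∀ j k i, Kx j k (x i) = x (Equiv.swap j k i)
  hKx_θ : ∀ j k i, Kx j k (θ i) = θ i
  hKx_extra : ∀ j k b, b ∈ extra → Kx j k b = b
  hKx_cont : ∀ j k, Continuous (Kx j k)
  -- O_{jk}, characterized by (x_j − x_k) O_{jk} f = x_j (1−K_{jk}) f (k<j),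
  --                          (x_j − x_k) O_{jk} f = x_k (1−K_{jk}) f (k>j)
  O : Fin N → Fin N → Module.End F A
  hO_lt : ∀ (j k : Fin N) (f : A), (k : ℕ) < (j : ℕ) → (x j - x k) * O j k f = x j * (f - Kx j k f)
  hO_gt : ∀ (j k : Fin N) (f : A), (j : ℕ) < (k : ℕ) → (x j - x k) * O j k f = x k * (f - Kx j k f)
  hO_cont : ∀ j k, Continuous (O j k)
  -- the simultaneous exchange operators 𝒦_σ
  Ks : Equiv.Perm (Fin N) → (A →ₐ[F] A)
  hKs_x : ∀ σ i, Ks σ (x i) = x (σ i)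
  hKs_θ : ∀ σ i, Ks σ (θ i) = θ (σ i)
  hKs_extra : ∀ σ b, b ∈ extra → Ks σ b = b
  hKs_cont : ∀ σ, Continuous (Ks σ)
  -- the projection θ₁∂_{θ₁}: it kills everything generated without θ₁ and
  -- fixes θ₁ · (anything generated without θ₁)
  T1 : Module.End F A
  hT1_zero : ∀ u, u ∈ (Algebra.adjoin F
      (Set.range x ∪ (θ '' {i | i ≠ ⟨0, hN⟩}) ∪ extra)).topologicalClosure → T1 u = 0
  hT1_one : ∀ u, u ∈ (Algebra.adjoin F
      (Set.range x ∪ (θ '' {i | i ≠ ⟨0, hN⟩}) ∪ extra)).topologicalClosure →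
      T1 (θ ⟨0, hN⟩ * u) = θ ⟨0, hN⟩ * u
  hT1_cont : Continuous T1

namespace DunklSystem

variable {N : ℕ} {A : Type} [Ring A] [Algebra F A] [TopologicalSpace A]
  [IsTopologicalRing A] (S : DunklSystem N A)

/-- The Dunkl–Cherednik operator
`D_j = x_j ∂_{x_j} + γ ∑_{k<j} O_{jk} + γ ∑_{k>j} O_{jk} − γ(j−1)`. -/
def D (γ : F) (j : Fin N) : Module.End F A :=
  (LinearMap.mulLeft F (S.x j)).comp (S.pdx j)
    + γ • (∑ k ∈ Finset.univ.erase j, S.O j k)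
    - (γ * ((j : ℕ) : F)) • (LinearMap.id : A →ₗ[F] A)

/-- `H_r = ∑_{j=1}^N D_j^r`. -/
def Hr (γ : F) (r : ℕ) : Module.End F A := ∑ j : Fin N, (S.D γ j) ^ r

/-- `I_s = (1/(N−1)!) ∑_{σ ∈ S_N} 𝒦_σ (θ₁ ∂_{θ₁} D₁^s) 𝒦_σ⁻¹`. -/
def Is (γ : F) (s : ℕ) : Module.End F A :=
  (((N - 1).factorial : ℕ) : F)⁻¹ •
    ∑ σ : Equiv.Perm (Fin N),
      ((S.Ks σ).toLinearMap.comp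
        ((S.T1 * (S.D γ ⟨0, S.hN⟩) ^ s : Module.End F A).comp
          (S.Ks σ⁻¹).toLinearMap))

/-- `H = H₂ + γ(N−1) H₁ − γ N (1−3N−2N²)/6`. -/
def Hstd (γ : F) : Module.End F A :=
  S.Hr γ 2 + (γ * ((N : F) - 1)) • S.Hr γ 1
    - (γ * (N : F) * (1 - 3 * (N : F) - 2 * (N : F) ^ 2) / 6) • (1 : Module.End F A)

/-- `I = I₁`. -/
def Istd (γ : F) : Module.End F A := S.Is γ 1

end DunklSystem

/-!
STATEMENT 9: The operators `H` and `I` (written in terms of the power sums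
and their derivatives, with `N` a fixed parameter) are self-adjoint with
respect to the combinatorial scalar product:
`⟨⟨H f | g⟩⟩_β = ⟨⟨f | H g⟩⟩_β` and `⟨⟨I f | g⟩⟩_β = ⟨⟨f | I g⟩⟩_β`
for all `f, g` in `P(β)`.
-/

/-! ### Auxiliary infrastructure for statement9 -/

namespace Stmt9

open SuperPartition

lemma beta_ne : (βp : F) ≠ 0 := RatFunc.X_ne_zero

lemma SP.ext {Λ Ω : SuperPartition} (ha : Λ.a = Ω.a) (hs : Λ.s = Ω.s) : Λ = Ω := by
  cases Λ; cases Ω; simp_all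

/-- The diagonal weight of the scalar product. -/
def w (Λ : SuperPartition) : F := Λ.sgn * Λ.zβ

lemma spF_eq (f g : PS) : spF f g = f.sum fun Λ c => c * g Λ * w Λ := rfl

lemma pUnit_apply (Λ Ω : SuperPartition) : pUnit Λ Ω = if Λ = Ω then 1 else 0 :=
  Finsupp.single_apply

lemma spF_pUnit_left (Λ : SuperPartition) (g : PS) :
    spF (pUnit Λ) g = g Λ * w Λ := by
  unfold spF pUnit
  rw [Finsupp.sum_single_index] <;> simp [w]

lemma spF_pUnit_right (f : PS) (Ω : SuperPartition) :
    spF f (pUnit Ω) = f Ω * w Ω := by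
  unfold spF
  rw [Finsupp.sum]
  rw [Finset.sum_eq_single Ω]
  · by_cases h : Ω ∈ f.support
    · simp [pUnit_apply, w]
    · have : f Ω = 0 := Finsupp.notMem_support_iff.mp h
      simp [this, pUnit_apply, w]
  · intro b _ hb
    simp [pUnit_apply, Ne.symm hb, w]
  · intro h
    have : f Ω = 0 := Finsupp.notMem_support_iff.mp h
    simp [this]

lemma spF_zero_left (g : PS) : spF 0 g = 0 := by simp [spF]

lemma spF_zero_right (f : PS) : spF f 0 = 0 := by simp [spF]

lemma spF_add_left (f f' g : PS) : spF (f + f') g = spF f g + spF f' g := by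
  unfold spF
  exact Finsupp.sum_add_index (by simp) (by intros; ring)

lemma spF_add_right (f g g' : PS) : spF f (g + g') = spF f g + spF f g' := by
  unfold spF
  rw [← Finsupp.sum_add]
  apply Finsupp.sum_congr
  intro Λ _
  simp [mul_add, add_mul]

lemma spF_smul_left (c : F) (f g : PS) : spF (c • f) g = c * spF f g := by
  unfold spF
  rw [Finsupp.sum_smul_index (by simp), Finsupp.mul_sum]
  apply Finsupp.sum_congr
  intro Λ _
  ring

lemma spF_smul_right (c : F) (f g : PS) : spF f (c • g) = c * spF f g := by
  unfold spF
  rw [Finsupp.mul_sum]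
  apply Finsupp.sum_congr
  intro Λ _
  simp
  ring

lemma spF_neg_right (f g : PS) : spF f (-g) = - spF f g := by
  have := spF_smul_right (-1) f g
  simpa using this

lemma spF_sum_left {ι : Type*} (s : Finset ι) (f : ι → PS) (g : PS) :
    spF (∑ i ∈ s, f i) g = ∑ i ∈ s, spF (f i) g := by
  induction s using Finset.cons_induction with
  | empty => simp [spF_zero_left]
  | cons a s ha ih => rw [Finset.sum_cons, Finset.sum_cons, spF_add_left, ih]

lemma spF_sum_right {ι : Type*} (s : Finset ι) (f : PS) (g : ι → PS) :
    spF f (∑ i ∈ s, g i) = ∑ i ∈ s, spF f (g i) := by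
  induction s using Finset.cons_induction with
  | empty => simp [spF_zero_right]
  | cons a s ha ih => rw [Finset.sum_cons, Finset.sum_cons, spF_add_right, ih]

lemma spF_comm (f g : PS) : spF f g = spF g f := by
  unfold spF
  rw [Finsupp.sum, Finsupp.sum]
  have h1 : ∑ x ∈ f.support, f x * g x * (x.sgn * x.zβ)
      = ∑ x ∈ f.support ∪ g.support, f x * g x * (x.sgn * x.zβ) := by
    apply Finset.sum_subset Finset.subset_union_left
    intro x _ hx
    simp [Finsupp.notMem_support_iff.mp hx]
  have h2 : ∑ x ∈ g.support, g x * f x * (x.sgn * x.zβ)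
      = ∑ x ∈ f.support ∪ g.support, g x * f x * (x.sgn * x.zβ) := by
    apply Finset.sum_subset Finset.subset_union_right
    intro x _ hx
    simp [Finsupp.notMem_support_iff.mp hx]
  rw [h1, h2]
  apply Finset.sum_congr rfl
  intro x _
  ring

end Stmt9

namespace Stmt9

open SuperPartition

lemma liftP_pUnit (gf : SuperPartition → PS) (Λ : SuperPartition) :
    liftP gf (pUnit Λ) = gf Λ := by
  unfold liftP pUnit
  simp

lemma opP_pU (n : ℕ) (Λ : SuperPartition) :
    opP n (pUnit Λ) = pUnit (addB n Λ) := liftP_pUnit _ _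

lemma opDP_pU (n : ℕ) (Λ : SuperPartition) :
    opDP n (pUnit Λ) = (Λ.s.count n : F) • pUnit (eraseB n Λ) := liftP_pUnit _ _

lemma opPt_pU (k : ℕ) (Λ : SuperPartition) :
    opPt k (pUnit Λ) =
      if k ∈ Λ.a then 0 else fsgn k Λ • pUnit (addF k Λ) := liftP_pUnit _ _

lemma opDPt_pU (k : ℕ) (Λ : SuperPartition) :
    opDPt k (pUnit Λ) =
      if k ∈ Λ.a then fsgn k Λ • pUnit (eraseF k Λ) else 0 := liftP_pUnit _ _

/-- The sign operator `ε : p_Λ ↦ (−1)^{fdeg Λ} p_Λ`. -/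
def eps : PS →ₗ[F] PS := liftP fun Λ => ((-1 : F) ^ Λ.fdeg) • pUnit Λ

lemma eps_pU (Λ : SuperPartition) :
    eps (pUnit Λ) = ((-1 : F) ^ Λ.fdeg) • pUnit Λ := liftP_pUnit _ _

/-- Two linear maps on `PS` agreeing on the `pUnit` basis agree everywhere. -/
lemma ext_basis {T S : PS →ₗ[F] PS}
    (h : ∀ Λ, T (pUnit Λ) = S (pUnit Λ)) (f : PS) : T f = S f := by
  have : T = S := by
    apply Finsupp.lhom_ext
    intro Λ b
    have hb : (Finsupp.single Λ b : PS) = b • pUnit Λ := by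
      unfold pUnit
      rw [Finsupp.smul_single, smul_eq_mul, mul_one]
    rw [hb, map_smul, map_smul, h]
  rw [this]

/-- Reduce an adjointness identity to basis vectors. -/
lemma adj_of_basis {T T' : PS →ₗ[F] PS}
    (h : ∀ Λ Ω, spF (T (pUnit Λ)) (pUnit Ω) = spF (pUnit Λ) (T' (pUnit Ω)))
    (f g : PS) : spF (T f) g = spF f (T' g) := by
  have key : ∀ Λ (g : PS), spF (T (pUnit Λ)) g = spF (pUnit Λ) (T' g) := by
    intro Λ g
    induction g using Finsupp.induction with
    | zero => simp [spF_zero_right]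
    | single_add Ω b g hΩ hb ih =>
      have hb2 : (Finsupp.single Ω b : PS) = b • pUnit Ω := by
        unfold pUnit; rw [Finsupp.smul_single, smul_eq_mul, mul_one]
      rw [hb2, map_add, spF_add_right, spF_add_right, ih, map_smul,
        spF_smul_right, spF_smul_right, h]
  induction f using Finsupp.induction with
  | zero => simp [spF_zero_left]
  | single_add Λ b f hΛ hb ih =>
    have hb2 : (Finsupp.single Λ b : PS) = b • pUnit Λ := by
      unfold pUnit; rw [Finsupp.smul_single, smul_eq_mul, mul_one]
    rw [hb2, map_add, spF_add_left, spF_add_left, ih, map_smul,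
      spF_smul_left, spF_smul_left, key]

/-! Structural lemmas about superpartition surgery. -/

lemma addB_a (n : ℕ) (Λ : SuperPartition) : (addB n Λ).a = Λ.a := by
  unfold addB; split <;> rfl

lemma addB_s (n : ℕ) (hn : 0 < n) (Λ : SuperPartition) :
    (addB n Λ).s = n ::ₘ Λ.s := by
  unfold addB; rw [dif_pos hn]

lemma eraseB_addB (n : ℕ) (hn : 0 < n) (Λ : SuperPartition) :
    eraseB n (addB n Λ) = Λ := by
  apply SP.ext
  · show (addB n Λ).a = Λ.a
    rw [addB_a]
  · show (addB n Λ).s.erase n = Λ.s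
    rw [addB_s n hn, Multiset.erase_cons_head]

lemma addB_eraseB {n : ℕ} {Ω : SuperPartition} (hm : n ∈ Ω.s) :
    addB n (eraseB n Ω) = Ω := by
  have hn : 0 < n := Ω.hs n hm
  apply SP.ext
  · rw [addB_a]; rfl
  · show (addB n (eraseB n Ω)).s = Ω.s
    rw [addB_s n hn]
    exact Multiset.cons_erase hm

lemma fdeg_addB (n : ℕ) (Λ : SuperPartition) : (addB n Λ).fdeg = Λ.fdeg := by
  unfold fdeg; rw [addB_a]

lemma fdeg_eraseB (n : ℕ) (Λ : SuperPartition) : (eraseB n Λ).fdeg = Λ.fdeg := rfl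

lemma addF_a (k : ℕ) (Λ : SuperPartition) : (addF k Λ).a = insert k Λ.a := rfl

lemma addF_s (k : ℕ) (Λ : SuperPartition) : (addF k Λ).s = Λ.s := rfl

lemma eraseF_addF {k : ℕ} {Λ : SuperPartition} (hk : k ∉ Λ.a) :
    eraseF k (addF k Λ) = Λ := by
  apply SP.ext
  · show (insert k Λ.a).erase k = Λ.a
    exact Finset.erase_insert hk
  · rfl

lemma addF_eraseF {k : ℕ} {Ω : SuperPartition} (hk : k ∈ Ω.a) :
    addF k (eraseF k Ω) = Ω := by
  apply SP.ext
  · show insert k (Ω.a.erase k) = Ω.a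
    exact Finset.insert_erase hk
  · rfl

lemma fdeg_addF {k : ℕ} {Λ : SuperPartition} (hk : k ∉ Λ.a) :
    (addF k Λ).fdeg = Λ.fdeg + 1 := by
  show (insert k Λ.a).card = Λ.a.card + 1
  exact Finset.card_insert_of_notMem hk

lemma fdeg_eraseF {k : ℕ} {Λ : SuperPartition} (hk : k ∈ Λ.a) :
    (eraseF k Λ).fdeg = Λ.fdeg - 1 := by
  show (Λ.a.erase k).card = Λ.a.card - 1
  exact Finset.card_erase_of_mem hk

lemma fsgn_addF {k : ℕ} (Λ : SuperPartition) :
    fsgn k (addF k Λ) = fsgn k Λ := by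
  unfold fsgn
  rw [addF_a, Finset.filter_insert, if_neg (lt_irrefl k)]

lemma fsgn_eraseF {k : ℕ} (Λ : SuperPartition) :
    fsgn k (eraseF k Λ) = fsgn k Λ := by
  unfold fsgn
  congr 2
  show Finset.filter (fun j => k < j) (Λ.a.erase k) = _
  rw [Finset.filter_erase, Finset.erase_eq_of_notMem]
  intro hmem
  exact absurd (Finset.mem_filter.mp hmem).2 (lt_irrefl k)

end Stmt9

namespace Stmt9

open SuperPartition

lemma nfact_addB (n : ℕ) (hn : 0 < n) (Λ : SuperPartition) :
    (addB n Λ).nfact = (Λ.s.count n + 1) * Λ.nfact := by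
  unfold nfact
  rw [addB_s n hn, Multiset.toFinset_cons]
  by_cases hm : n ∈ Λ.s.toFinset
  · rw [Finset.insert_eq_self.mpr hm]
    rw [← Finset.mul_prod_erase _ _ hm, ← Finset.mul_prod_erase _ _ hm]
    rw [Multiset.count_cons_self, Nat.factorial_succ]
    rw [Finset.prod_congr rfl (fun i hi => by
      rw [Multiset.count_cons_of_ne (Finset.ne_of_mem_erase hi)])]
    ring
  · rw [Finset.prod_insert hm]
    have h0 : Λ.s.count n = 0 := by
      rw [Multiset.count_eq_zero]
      intro hmem
      exact hm (Multiset.mem_toFinset.mpr hmem)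
    rw [Multiset.count_cons_self, h0]
    rw [Finset.prod_congr rfl (fun i hi => by
      rw [Multiset.count_cons_of_ne (by rintro rfl; exact hm hi)])]
    simp

lemma zs_addB (n : ℕ) (hn : 0 < n) (Λ : SuperPartition) :
    (addB n Λ).zs = n * (Λ.s.count n + 1) * Λ.zs := by
  unfold zs
  rw [addB_s n hn, Multiset.prod_cons, nfact_addB n hn]
  · unfold nfact
    ring

lemma ell_addB (n : ℕ) (hn : 0 < n) (Λ : SuperPartition) :
    (addB n Λ).ell = Λ.ell + 1 := by
  unfold ell
  rw [addB_a, addB_s n hn, Multiset.card_cons]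
  ring

lemma sgn_addB (n : ℕ) (Λ : SuperPartition) : (addB n Λ).sgn = Λ.sgn := by
  unfold sgn
  rw [fdeg_addB]

lemma w_addB (n : ℕ) (hn : 0 < n) (Λ : SuperPartition) :
    w (addB n Λ) = βp⁻¹ * (n : F) * ((Λ.s.count n + 1 : ℕ) : F) * w Λ := by
  unfold w zβ zgen
  rw [sgn_addB, ell_addB n hn, zs_addB n hn, pow_succ]
  push_cast
  ring

lemma ell_addF {k : ℕ} {Λ : SuperPartition} (hk : k ∉ Λ.a) :
    (addF k Λ).ell = Λ.ell + 1 := by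
  unfold ell
  show (insert k Λ.a).card + _ = _
  rw [Finset.card_insert_of_notMem hk]
  show Λ.a.card + 1 + Multiset.card Λ.s = _
  ring

lemma zs_addF (k : ℕ) (Λ : SuperPartition) : (addF k Λ).zs = Λ.zs := rfl

lemma tri_succ (m : ℕ) : (m + 1) * m / 2 = m * (m - 1) / 2 + m := by
  rcases m with _ | p
  · simp
  · have hev : Even ((p + 1) * p) := by
      rcases Nat.even_or_odd p with h | h
      · exact h.mul_left _
      · obtain ⟨c, hc⟩ := h
        exact ⟨(c + 1) * p, by rw [hc]; ring⟩
    obtain ⟨t, ht⟩ := hev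
    have h1 : (p + 1 + 1) * (p + 1) = (p + 1) * p + 2 * (p + 1) := by ring
    have h2 : (p + 1) * ((p + 1) - 1) = (p + 1) * p := by simp
    rw [h1, h2]
    omega

lemma sgn_addF {k : ℕ} {Λ : SuperPartition} (hk : k ∉ Λ.a) :
    (addF k Λ).sgn = (-1 : F) ^ Λ.fdeg * Λ.sgn := by
  unfold sgn
  rw [fdeg_addF hk]
  rw [show (Λ.fdeg + 1) * (Λ.fdeg + 1 - 1) / 2 = (Λ.fdeg + 1) * Λ.fdeg / 2 by simp]
  rw [tri_succ, pow_add, mul_comm]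

lemma w_addF {k : ℕ} {Λ : SuperPartition} (hk : k ∉ Λ.a) :
    w (addF k Λ) = (-1 : F) ^ Λ.fdeg * βp⁻¹ * w Λ := by
  unfold w zβ zgen
  rw [sgn_addF hk, ell_addF hk, zs_addF, pow_succ]
  ring

end Stmt9

namespace Stmt9

open SuperPartition

noncomputable instance : CharZero F :=
  charZero_of_injective_algebraMap (algebraMap ℚ F).injective

lemma adjP_basis (n : ℕ) (hn : 0 < n) (Λ Ω : SuperPartition) :
    spF (opP n (pUnit Λ)) (pUnit Ω)
      = (n : F) / βp * spF (pUnit Λ) (opDP n (pUnit Ω)) := by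
  rw [opP_pU, opDP_pU, spF_pUnit_left, spF_pUnit_left, pUnit_apply,
    Finsupp.smul_apply, pUnit_apply]
  by_cases h : Ω = addB n Λ
  · subst h
    have hc : (addB n Λ).s.count n = Λ.s.count n + 1 := by
      rw [addB_s n hn, Multiset.count_cons_self]
    rw [if_pos rfl, eraseB_addB n hn, if_pos rfl, hc, w_addB n hn]
    push_cast
    field_simp
    ring
  · rw [if_neg h]
    by_cases hm : n ∈ Ω.s
    · have hne : eraseB n Ω ≠ Λ := by
        intro he
        exact h (by rw [← he, addB_eraseB hm])
      rw [if_neg hne]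
      simp
    · have h0 : Ω.s.count n = 0 := Multiset.count_eq_zero.mpr hm
      rw [h0]
      simp

lemma adjP (n : ℕ) (hn : 0 < n) (f g : PS) :
    spF (opP n f) g = (n : F) / βp * spF f (opDP n g) := by
  have h := adj_of_basis (T := opP n) (T' := ((n : F) / βp) • opDP n)
    (fun Λ Ω => by
      rw [LinearMap.smul_apply, spF_smul_right]
      exact adjP_basis n hn Λ Ω) f g
  rw [h, LinearMap.smul_apply, spF_smul_right]

lemma adjPt_basis (k : ℕ) (Λ Ω : SuperPartition) :
    spF (opPt k (pUnit Λ)) (pUnit Ω)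
      = -βp⁻¹ * spF (pUnit Λ) (opDPt k (eps (pUnit Ω))) := by
  rw [opPt_pU, eps_pU, map_smul, opDPt_pU]
  by_cases hkΛ : k ∈ Λ.a
  · rw [if_pos hkΛ, spF_zero_left]
    by_cases hkΩ : k ∈ Ω.a
    · rw [if_pos hkΩ, spF_smul_right, spF_smul_right, spF_pUnit_left,
        pUnit_apply]
      rw [if_neg (by
        intro he
        rw [← he] at hkΛ
        exact (Finset.notMem_erase k Ω.a) hkΛ)]
      simp
    · rw [if_neg hkΩ]
      simp [spF_zero_right]
  · rw [if_neg hkΛ, spF_smul_left, spF_pUnit_left, pUnit_apply]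
    by_cases hΩ : Ω = addF k Λ
    · subst hΩ
      rw [if_pos rfl]
      rw [if_pos (show k ∈ (addF k Λ).a from Finset.mem_insert_self k Λ.a)]
      rw [spF_smul_right, spF_smul_right, spF_pUnit_left,
        pUnit_apply, if_pos (eraseF_addF hkΛ), fsgn_addF, fdeg_addF hkΛ,
        w_addF hkΛ, pow_succ]
      ring
    · rw [if_neg hΩ]
      by_cases hkΩ : k ∈ Ω.a
      · rw [if_pos hkΩ, spF_smul_right, spF_smul_right, spF_pUnit_left,
          pUnit_apply]
        rw [if_neg (by
          intro he
          exact hΩ (by rw [← addF_eraseF hkΩ, he]))]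
        simp
      · rw [if_neg hkΩ]
        simp [spF_zero_right]

lemma adjPt (k : ℕ) (f g : PS) :
    spF (opPt k f) g = -βp⁻¹ * spF f (opDPt k (eps g)) := by
  have h := adj_of_basis (T := opPt k) (T' := (-βp⁻¹) • (opDPt k ∘ₗ eps))
    (fun Λ Ω => by
      rw [LinearMap.smul_apply, spF_smul_right, LinearMap.comp_apply]
      exact adjPt_basis k Λ Ω) f g
  rw [h, LinearMap.smul_apply, spF_smul_right, LinearMap.comp_apply]

lemma adjEps (f g : PS) : spF (eps f) g = spF f (eps g) := by
  apply adj_of_basis (T := eps) (T' := eps)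
  intro Λ Ω
  rw [eps_pU, eps_pU, spF_smul_left, spF_smul_right, spF_pUnit_left,
    pUnit_apply]
  by_cases h : Ω = Λ
  · subst h
    simp
  · rw [if_neg h]
    simp

lemma eps_eps (f : PS) : eps (eps f) = f := by
  have := ext_basis (T := eps ∘ₗ eps) (S := LinearMap.id) (fun Λ => by
    rw [LinearMap.comp_apply, eps_pU, map_smul, eps_pU, smul_smul,
      ← pow_add, Even.neg_one_pow ⟨Λ.fdeg, rfl⟩, LinearMap.id_apply, one_smul]) f
  simpa using this

lemma eps_opP (n : ℕ) (f : PS) : eps (opP n f) = opP n (eps f) := by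
  exact ext_basis (T := eps ∘ₗ opP n) (S := opP n ∘ₗ eps) (fun Λ => by
    rw [LinearMap.comp_apply, LinearMap.comp_apply, opP_pU, eps_pU, eps_pU,
      map_smul, opP_pU, fdeg_addB]) f

lemma eps_opDP (n : ℕ) (f : PS) : eps (opDP n f) = opDP n (eps f) := by
  exact ext_basis (T := eps ∘ₗ opDP n) (S := opDP n ∘ₗ eps) (fun Λ => by
    rw [LinearMap.comp_apply, LinearMap.comp_apply, opDP_pU, eps_pU,
      map_smul, map_smul, opDP_pU, eps_pU, smul_smul, smul_smul,
      fdeg_eraseB, mul_comm]) f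

lemma eps_opPt (k : ℕ) (f : PS) : eps (opPt k f) = -(opPt k (eps f)) := by
  exact ext_basis (T := eps ∘ₗ opPt k) (S := -(opPt k ∘ₗ eps)) (fun Λ => by
    rw [LinearMap.comp_apply, LinearMap.neg_apply, LinearMap.comp_apply,
      opPt_pU, eps_pU, map_smul, opPt_pU]
    by_cases hk : k ∈ Λ.a
    · rw [if_pos hk]
      simp
    · rw [if_neg hk, map_smul, eps_pU, fdeg_addF hk, smul_smul,
        smul_smul, pow_succ]
      rw [← neg_smul]
      congr 1
      ring) f

lemma eps_opDPt (k : ℕ) (f : PS) : eps (opDPt k f) = -(opDPt k (eps f)) := by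
  exact ext_basis (T := eps ∘ₗ opDPt k) (S := -(opDPt k ∘ₗ eps)) (fun Λ => by
    rw [LinearMap.comp_apply, LinearMap.neg_apply, LinearMap.comp_apply,
      opDPt_pU, eps_pU, map_smul, opDPt_pU]
    by_cases hk : k ∈ Λ.a
    · have hm : 0 < Λ.fdeg := Finset.card_pos.mpr ⟨k, hk⟩
      rw [if_pos hk, map_smul, eps_pU, fdeg_eraseF hk, smul_smul,
        smul_smul]
      rw [← neg_smul]
      congr 1
      have hpow : (-1 : F) ^ Λ.fdeg = (-1) ^ (Λ.fdeg - 1) * (-1) := by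
        rw [← pow_succ, Nat.sub_add_cancel hm]
      rw [hpow]
      ring
    · rw [if_neg hk]
      simp) f

lemma adjDP (n : ℕ) (hn : 0 < n) (f g : PS) :
    spF (opDP n f) g = βp / (n : F) * spF f (opP n g) := by
  have hn' : ((n : F)) ≠ 0 := Nat.cast_ne_zero.mpr hn.ne'
  have h := adjP n hn g f
  calc spF (opDP n f) g = spF g (opDP n f) := spF_comm _ _
    _ = βp / (n : F) * spF (opP n g) f := by
        rw [h, ← mul_assoc, div_mul_div_comm, mul_comm βp ((n : F)),
          div_self (mul_ne_zero hn' beta_ne), one_mul]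
    _ = βp / (n : F) * spF f (opP n g) := by rw [spF_comm]

lemma adjDPt (k : ℕ) (f g : PS) :
    spF (opDPt k f) g = βp * spF f (opPt k (eps g)) := by
  have h := adjPt k g (eps f)
  rw [eps_eps] at h
  calc spF (opDPt k f) g = spF g (opDPt k f) := spF_comm _ _
    _ = -βp * spF (opPt k g) (eps f) := by
        rw [h, ← mul_assoc, neg_mul_neg, mul_inv_cancel₀ beta_ne, one_mul]
    _ = -βp * spF (eps f) (opPt k g) := by rw [spF_comm]
    _ = -βp * spF f (eps (opPt k g)) := by rw [adjEps]
    _ = βp * spF f (opPt k (eps g)) := by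
        rw [eps_opPt, spF_neg_right]
        ring

end Stmt9

namespace Stmt9

open SuperPartition

lemma pair1a (n : ℕ) (hn : 0 < n) (f g : PS) :
    spF (opP n (opDP n f)) g = spF f (opP n (opDP n g)) := by
  have hn' : ((n : F)) ≠ 0 := Nat.cast_ne_zero.mpr hn.ne'
  rw [adjP n hn, adjDP n hn]
  field_simp [beta_ne]

lemma pair1b (k : ℕ) (f g : PS) :
    spF (opPt k (opDPt k f)) g = spF f (opPt k (opDPt k g)) := by
  rw [adjPt k, adjDPt k, eps_opDPt, eps_eps, map_neg, spF_neg_right]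
  field_simp [beta_ne]

lemma pairH2a (m n : ℕ) (hm : 0 < m) (hn : 0 < n) (f g : PS) :
    spF (opP m (opP n (opDP (m + n) f))) g
      = ((m : F) * (n : F)) / (βp * ((m : F) + (n : F)))
        * spF f (opP (m + n) (opDP n (opDP m g))) := by
  have hmn : 0 < m + n := by omega
  have hm' : ((m : F)) ≠ 0 := Nat.cast_ne_zero.mpr hm.ne'
  have hn' : ((n : F)) ≠ 0 := Nat.cast_ne_zero.mpr hn.ne'
  have hcast : ((m + n : ℕ) : F) = (m : F) + (n : F) := by push_cast; ring
  have hs : ((m : F) + (n : F)) ≠ 0 := by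
    rw [← hcast]; exact Nat.cast_ne_zero.mpr hmn.ne'
  rw [adjP m hm, adjP n hn, adjDP (m + n) hmn, hcast]
  field_simp [beta_ne, hm', hn', hs]

lemma pairH2b (m n : ℕ) (hn : 0 < n) (f g : PS) :
    spF (opP n (opPt m (opDPt (n + m) f))) g
      = (n : F) / βp * spF f (opPt (n + m) (opDPt m (opDP n g))) := by
  have hn' : ((n : F)) ≠ 0 := Nat.cast_ne_zero.mpr hn.ne'
  rw [adjP n hn, adjPt m, adjDPt (n + m), eps_opDPt, eps_eps, map_neg,
    spF_neg_right]
  field_simp [beta_ne, hn']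

lemma pairI2 (m n : ℕ) (f g : PS) :
    spF (opPt m (opPt n (opDPt m (opDPt n f)))) g
      = spF f (opPt n (opPt m (opDPt n (opDPt m g)))) := by
  rw [adjPt m, adjPt n, adjDPt m, adjDPt n]
  simp only [eps_opPt, eps_opDPt, eps_eps, map_neg, spF_neg_right, neg_neg]
  field_simp [beta_ne]

lemma pairI3 (m n : ℕ) (hn : 0 < n) (f g : PS) :
    spF (opPt (m + n) (opDPt m (opDP n f))) g
      = βp / (n : F) * spF f (opP n (opPt m (opDPt (m + n) g))) := by
  have hn' : ((n : F)) ≠ 0 := Nat.cast_ne_zero.mpr hn.ne'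
  rw [adjPt (m + n), adjDPt m, adjDP n hn]
  simp only [eps_opDPt, eps_eps, map_neg, spF_neg_right]
  field_simp [beta_ne, hn']

/-! Vanishing of the operators above the bosonic degree. -/

lemma sum_le_bdeg (Λ : SuperPartition) : Λ.s.sum ≤ Λ.bdeg := Nat.le_add_left _ _

lemma count_zero_of_big {Λ : SuperPartition} {n : ℕ} (h : Λ.bdeg < n) :
    Λ.s.count n = 0 := by
  rw [Multiset.count_eq_zero]
  intro hmem
  have h1 : n ≤ Λ.s.sum :=
    Multiset.single_le_sum (fun x _ => Nat.zero_le x) n hmem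
  have h2 : Λ.s.sum ≤ Λ.bdeg := sum_le_bdeg Λ
  omega

lemma opDP_big {Λ : SuperPartition} {n : ℕ} (h : Λ.bdeg < n) :
    opDP n (pUnit Λ) = 0 := by
  rw [opDP_pU, count_zero_of_big h]
  simp

lemma not_mem_a_big {Λ : SuperPartition} {k : ℕ} (h : Λ.bdeg < k) : k ∉ Λ.a := by
  intro hk
  have h1 : k ≤ ∑ i ∈ Λ.a, i :=
    Finset.single_le_sum (f := fun i => i) (fun i _ => Nat.zero_le i) hk
  have h2 : (∑ i ∈ Λ.a, i) ≤ Λ.bdeg := Nat.le_add_right _ _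
  omega

lemma opDPt_big {Λ : SuperPartition} {k : ℕ} (h : Λ.bdeg < k) :
    opDPt k (pUnit Λ) = 0 := by
  rw [opDPt_pU, if_neg (not_mem_a_big h)]

lemma bdeg_eraseB_le (n : ℕ) (Λ : SuperPartition) :
    (eraseB n Λ).bdeg ≤ Λ.bdeg := by
  unfold bdeg
  have : (Λ.s.erase n).sum ≤ Λ.s.sum := by
    by_cases hn : n ∈ Λ.s
    · have := Multiset.cons_erase hn
      calc (Λ.s.erase n).sum ≤ n + (Λ.s.erase n).sum := Nat.le_add_left _ _
        _ = (n ::ₘ Λ.s.erase n).sum := (Multiset.sum_cons _ _).symm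
        _ = Λ.s.sum := by rw [this]
    · rw [Multiset.erase_of_notMem hn]
  have ha : (eraseB n Λ).a = Λ.a := rfl
  have hss : (eraseB n Λ).s = Λ.s.erase n := rfl
  rw [ha, hss]
  omega

lemma bdeg_eraseF_le (k : ℕ) (Λ : SuperPartition) :
    (eraseF k Λ).bdeg ≤ Λ.bdeg := by
  unfold bdeg
  have : (∑ i ∈ Λ.a.erase k, i) ≤ ∑ i ∈ Λ.a, i :=
    Finset.sum_le_sum_of_subset (Finset.erase_subset _ _)
  have hss : (eraseF k Λ).s = Λ.s := rfl
  have ha : (eraseF k Λ).a = Λ.a.erase k := rfl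
  rw [ha, hss]
  omega

end Stmt9

namespace Stmt9

open SuperPartition

/-- Reversed form of `pairH2a`. -/
lemma pairH2a' (m n : ℕ) (hm : 0 < m) (hn : 0 < n) (f g : PS) :
    spF (opP (m + n) (opDP n (opDP m f))) g
      = (βp * ((m : F) + (n : F))) / ((m : F) * (n : F))
        * spF f (opP m (opP n (opDP (m + n) g))) := by
  have hm' : ((m : F)) ≠ 0 := Nat.cast_ne_zero.mpr hm.ne'
  have hn' : ((n : F)) ≠ 0 := Nat.cast_ne_zero.mpr hn.ne'
  have hs : ((m : F) + (n : F)) ≠ 0 := by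
    have : ((m + n : ℕ) : F) = (m : F) + (n : F) := by push_cast; ring
    rw [← this]
    exact Nat.cast_ne_zero.mpr (by omega)
  have h := pairH2a m n hm hn g f
  have hc : ((m : F) * (n : F)) / (βp * ((m : F) + (n : F))) ≠ 0 :=
    div_ne_zero (mul_ne_zero hm' hn') (mul_ne_zero beta_ne hs)
  calc spF (opP (m + n) (opDP n (opDP m f))) g
      = spF g (opP (m + n) (opDP n (opDP m f))) := spF_comm _ _
    _ = (((m : F) * (n : F)) / (βp * ((m : F) + (n : F))))⁻¹
        * spF (opP m (opP n (opDP (m + n) g))) f := by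
        rw [h, ← mul_assoc, inv_mul_cancel₀ hc, one_mul]
    _ = (βp * ((m : F) + (n : F))) / ((m : F) * (n : F))
        * spF f (opP m (opP n (opDP (m + n) g))) := by
        rw [inv_div, spF_comm]

/-- Reversed form of `pairH2b` (same as `pairI3` up to index order). -/
lemma pairH2b' (m n : ℕ) (hn : 0 < n) (f g : PS) :
    spF (opPt (n + m) (opDPt m (opDP n f))) g
      = βp / (n : F) * spF f (opP n (opPt m (opDPt (n + m) g))) := by
  have := pairI3 m n hn f g
  rwa [Nat.add_comm m n] at this

/-- Reversed form of `pairI3` (same as `pairH2b` up to index order). -/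
lemma pairI3' (m n : ℕ) (hn : 0 < n) (f g : PS) :
    spF (opP n (opPt m (opDPt (m + n) f))) g
      = (n : F) / βp * spF f (opPt (m + n) (opDPt m (opDP n g))) := by
  have := pairH2b m n hn f g
  rwa [Nat.add_comm n m] at this

/-! The individual terms of `Hop9`. -/

def t1 (Ncst : F) (X : SuperPartition) (n : ℕ) : PS :=
  ((n : F) ^ 2 + βp * (n : F) * (Ncst - (n : F))) •
    (opP n (opDP n (pUnit X)) + opPt n (opDPt n (pUnit X)))

def t2 (X : SuperPartition) (m n : ℕ) : PS :=
  ((m + n : ℕ) : F) • opP m (opP n (opDP (m + n) (pUnit X)))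
    + (2 * (m : F)) • opP n (opPt m (opDPt (n + m) (pUnit X)))

def t3 (X : SuperPartition) (m n : ℕ) : PS :=
  ((m : F) * (n : F)) • (opP (m + n) (opDP n (opDP m (pUnit X)))
    + (2 : F) • opPt (n + m) (opDPt m (opDP n (pUnit X))))

lemma Hop9_pU (Ncst : F) (X : SuperPartition) :
    Hop9 Ncst (pUnit X)
      = (∑ n ∈ Finset.Icc 1 X.bdeg, t1 Ncst X n)
        + βp • (∑ m ∈ Finset.Icc 1 X.bdeg, ∑ n ∈ Finset.Icc 1 X.bdeg, t2 X m n)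
        + ∑ m ∈ Finset.Icc 1 X.bdeg, ∑ n ∈ Finset.Icc 1 X.bdeg, t3 X m n := by
  unfold Hop9
  rw [liftP_pUnit]
  rfl

lemma t1_zero (Ncst : F) {X : SuperPartition} {n : ℕ} (h : X.bdeg < n) :
    t1 Ncst X n = 0 := by
  unfold t1
  rw [opDP_big h, opDPt_big h]
  simp

lemma t2_zero {X : SuperPartition} {m n : ℕ} (h : X.bdeg < m ∨ X.bdeg < n) :
    t2 X m n = 0 := by
  have hmn : X.bdeg < m + n := by omega
  have hnm : X.bdeg < n + m := by omega
  unfold t2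
  rw [opDP_big hmn, opDPt_big hnm]
  simp

lemma t3_zero {X : SuperPartition} {m n : ℕ} (h : X.bdeg < m ∨ X.bdeg < n) :
    t3 X m n = 0 := by
  unfold t3
  rcases h with h | h
  · have h2 : opDPt m (opDP n (pUnit X)) = 0 := by
      rw [opDP_pU, map_smul, opDPt_big (lt_of_le_of_lt (bdeg_eraseB_le n X) h),
        smul_zero]
    rw [opDP_big h, h2]
    simp
  · have h2 : opDP n (opDP m (pUnit X)) = 0 := by
      rw [opDP_pU, map_smul, opDP_big (lt_of_le_of_lt (bdeg_eraseB_le m X) h),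
        smul_zero]
    rw [h2, opDP_big h]
    simp

/-! Sum extension helpers. -/

lemma sum2_subset {hfun : ℕ → ℕ → F} {A B A' B' : Finset ℕ}
    (hAB : A ⊆ B) (hAB' : A' ⊆ B')
    (h : ∀ m n, m ∈ B → n ∈ B' → (m ∉ A ∨ n ∉ A') → hfun m n = 0) :
    (∑ m ∈ A, ∑ n ∈ A', hfun m n) = ∑ m ∈ B, ∑ n ∈ B', hfun m n := by
  rw [Finset.sum_subset hAB (fun m hm hma => Finset.sum_eq_zero
    (fun n hn => h m n hm (hAB' hn) (Or.inl hma)))]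
  exact Finset.sum_congr rfl (fun m hm =>
    Finset.sum_subset hAB' (fun n hn hna => h m n hm hn (Or.inr hna)))

/-! Per-term adjointness identities for `H`. -/

lemma termH1 (Ncst : F) (Λ Ω : SuperPartition) (n : ℕ) (hn : 0 < n) :
    spF (t1 Ncst Λ n) (pUnit Ω) = spF (pUnit Λ) (t1 Ncst Ω n) := by
  unfold t1
  rw [spF_smul_left, spF_smul_right, spF_add_left, spF_add_right,
    pair1a n hn, pair1b n]

lemma termH23 (Λ Ω : SuperPartition) (m n : ℕ) (hm : 0 < m) (hn : 0 < n) :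
    βp * spF (t2 Λ m n) (pUnit Ω) = spF (pUnit Λ) (t3 Ω m n) := by
  have hm' : ((m : F)) ≠ 0 := Nat.cast_ne_zero.mpr hm.ne'
  have hn' : ((n : F)) ≠ 0 := Nat.cast_ne_zero.mpr hn.ne'
  have hs : ((m : F) + (n : F)) ≠ 0 := by
    have hc : ((m + n : ℕ) : F) = (m : F) + (n : F) := by push_cast; ring
    rw [← hc]
    exact Nat.cast_ne_zero.mpr (by omega)
  have h2 : βp * (m : F) + βp * (n : F) ≠ 0 := by
    have := mul_ne_zero beta_ne hs
    rwa [mul_add] at this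
  unfold t2 t3
  rw [spF_add_left, spF_smul_left, spF_smul_left,
    pairH2a m n hm hn, pairH2b m n hn,
    spF_smul_right, spF_add_right, spF_smul_right]
  push_cast
  field_simp [beta_ne, hm', hn', hs, h2]

lemma termH32 (Λ Ω : SuperPartition) (m n : ℕ) (hm : 0 < m) (hn : 0 < n) :
    spF (t3 Λ m n) (pUnit Ω) = βp * spF (pUnit Λ) (t2 Ω m n) := by
  have hm' : ((m : F)) ≠ 0 := Nat.cast_ne_zero.mpr hm.ne'
  have hn' : ((n : F)) ≠ 0 := Nat.cast_ne_zero.mpr hn.ne'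
  have hs : ((m : F) + (n : F)) ≠ 0 := by
    have hc : ((m + n : ℕ) : F) = (m : F) + (n : F) := by push_cast; ring
    rw [← hc]
    exact Nat.cast_ne_zero.mpr (by omega)
  have h2 : βp * (m : F) + βp * (n : F) ≠ 0 := by
    have := mul_ne_zero beta_ne hs
    rwa [mul_add] at this
  unfold t2 t3
  rw [spF_smul_left, spF_add_left, spF_smul_left,
    pairH2a' m n hm hn, pairH2b' m n hn,
    spF_add_right, spF_smul_right, spF_smul_right]
  push_cast
  field_simp [beta_ne, hm', hn', hs, h2]

/-! The main self-adjointness of `H` on basis vectors. -/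

lemma H_basis (Ncst : F) (Λ Ω : SuperPartition) :
    spF (Hop9 Ncst (pUnit Λ)) (pUnit Ω) = spF (pUnit Λ) (Hop9 Ncst (pUnit Ω)) := by
  have hsubL : Finset.Icc 1 Λ.bdeg ⊆ Finset.Icc 1 (max Λ.bdeg Ω.bdeg) :=
    Finset.Icc_subset_Icc_right (le_max_left _ _)
  have hsubR : Finset.Icc 1 Ω.bdeg ⊆ Finset.Icc 1 (max Λ.bdeg Ω.bdeg) :=
    Finset.Icc_subset_Icc_right (le_max_right _ _)
  rw [Hop9_pU, Hop9_pU]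
  simp only [spF_add_left, spF_smul_left, spF_sum_left, spF_add_right,
    spF_smul_right, spF_sum_right]
  rw [Finset.sum_subset hsubL (fun n hn hn2 => by
    have h : Λ.bdeg < n := by
      simp only [Finset.mem_Icc] at hn hn2
      omega
    rw [t1_zero Ncst h, spF_zero_left])]
  rw [sum2_subset hsubL hsubL (fun m n hm hn h => by
    have h' : Λ.bdeg < m ∨ Λ.bdeg < n := by
      simp only [Finset.mem_Icc] at hm hn h
      omega
    rw [t2_zero h', spF_zero_left])]
  rw [sum2_subset hsubL hsubL (fun m n hm hn h => by
    have h' : Λ.bdeg < m ∨ Λ.bdeg < n := by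
      simp only [Finset.mem_Icc] at hm hn h
      omega
    rw [t3_zero h', spF_zero_left])]
  rw [Finset.sum_subset hsubR (fun n hn hn2 => by
    have h : Ω.bdeg < n := by
      simp only [Finset.mem_Icc] at hn hn2
      omega
    rw [t1_zero Ncst h, spF_zero_right])]
  rw [sum2_subset hsubR hsubR (fun m n hm hn h => by
    have h' : Ω.bdeg < m ∨ Ω.bdeg < n := by
      simp only [Finset.mem_Icc] at hm hn h
      omega
    rw [t2_zero h', spF_zero_right])]
  rw [sum2_subset hsubR hsubR (fun m n hm hn h => by
    have h' : Ω.bdeg < m ∨ Ω.bdeg < n := by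
      simp only [Finset.mem_Icc] at hm hn h
      omega
    rw [t3_zero h', spF_zero_right])]
  have c1 : ∑ n ∈ Finset.Icc 1 (max Λ.bdeg Ω.bdeg), spF (t1 Ncst Λ n) (pUnit Ω)
      = ∑ n ∈ Finset.Icc 1 (max Λ.bdeg Ω.bdeg), spF (pUnit Λ) (t1 Ncst Ω n) :=
    Finset.sum_congr rfl (fun n hn =>
      termH1 Ncst Λ Ω n (by simp only [Finset.mem_Icc] at hn; omega))
  have c23 : βp * ∑ m ∈ Finset.Icc 1 (max Λ.bdeg Ω.bdeg),
        ∑ n ∈ Finset.Icc 1 (max Λ.bdeg Ω.bdeg), spF (t2 Λ m n) (pUnit Ω)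
      = ∑ m ∈ Finset.Icc 1 (max Λ.bdeg Ω.bdeg),
        ∑ n ∈ Finset.Icc 1 (max Λ.bdeg Ω.bdeg), spF (pUnit Λ) (t3 Ω m n) := by
    rw [Finset.mul_sum]
    refine Finset.sum_congr rfl (fun m hm => ?_)
    rw [Finset.mul_sum]
    refine Finset.sum_congr rfl (fun n hn => ?_)
    simp only [Finset.mem_Icc] at hm hn
    exact termH23 Λ Ω m n (by omega) (by omega)
  have c32 : ∑ m ∈ Finset.Icc 1 (max Λ.bdeg Ω.bdeg),
        ∑ n ∈ Finset.Icc 1 (max Λ.bdeg Ω.bdeg), spF (t3 Λ m n) (pUnit Ω)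
      = βp * ∑ m ∈ Finset.Icc 1 (max Λ.bdeg Ω.bdeg),
        ∑ n ∈ Finset.Icc 1 (max Λ.bdeg Ω.bdeg), spF (pUnit Λ) (t2 Ω m n) := by
    rw [Finset.mul_sum]
    refine Finset.sum_congr rfl (fun m hm => ?_)
    rw [Finset.mul_sum]
    refine Finset.sum_congr rfl (fun n hn => ?_)
    simp only [Finset.mem_Icc] at hm hn
    exact termH32 Λ Ω m n (by omega) (by omega)
  rw [c1, c23, c32]
  ring

lemma H_main (Ncst : F) (f g : PS) :
    spF (Hop9 Ncst f) g = spF f (Hop9 Ncst g) :=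
  adj_of_basis (H_basis Ncst) f g

end Stmt9

namespace Stmt9

open SuperPartition

/-! The individual terms of `Iop9`. -/

def u1 (X : SuperPartition) (n : ℕ) : PS :=
  ((1 - βp) * (n : F)) • opPt n (opDPt n (pUnit X))

def u2 (X : SuperPartition) (m n : ℕ) : PS :=
  opPt m (opPt n (opDPt m (opDPt n (pUnit X))))

def u3 (X : SuperPartition) (m n : ℕ) : PS :=
  (n : F) • opPt (m + n) (opDPt m (opDP n (pUnit X)))
    + βp • opP n (opPt m (opDPt (m + n) (pUnit X)))

lemma Iop9_pU (X : SuperPartition) :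
    Iop9 (pUnit X)
      = (∑ n ∈ Finset.range (X.bdeg + 1), u1 X n)
        + (βp / 2) • (∑ m ∈ Finset.range (X.bdeg + 1),
            ∑ n ∈ Finset.range (X.bdeg + 1), u2 X m n)
        + ∑ m ∈ Finset.range (X.bdeg + 1), ∑ n ∈ Finset.Icc 1 X.bdeg, u3 X m n := by
  unfold Iop9
  rw [liftP_pUnit]
  rfl

lemma u1_zero {X : SuperPartition} {n : ℕ} (h : X.bdeg < n) : u1 X n = 0 := by
  unfold u1
  rw [opDPt_big h]
  simp

lemma u2_zero {X : SuperPartition} {m n : ℕ} (h : X.bdeg < m ∨ X.bdeg < n) :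
    u2 X m n = 0 := by
  unfold u2
  rcases h with h | h
  · have h2 : opDPt m (opDPt n (pUnit X)) = 0 := by
      rw [opDPt_pU]
      by_cases hn : n ∈ X.a
      · rw [if_pos hn, map_smul,
          opDPt_big (lt_of_le_of_lt (bdeg_eraseF_le n X) h), smul_zero]
      · rw [if_neg hn, map_zero]
    rw [h2]
    simp
  · rw [opDPt_big h]
    simp

lemma u3_zero {X : SuperPartition} {m n : ℕ} (h : X.bdeg < m ∨ X.bdeg < n) :
    u3 X m n = 0 := by
  unfold u3
  rcases h with h | h
  · have h2 : opDPt m (opDP n (pUnit X)) = 0 := by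
      rw [opDP_pU, map_smul,
        opDPt_big (lt_of_le_of_lt (bdeg_eraseB_le n X) h), smul_zero]
    rw [h2, opDPt_big (show X.bdeg < m + n by omega)]
    simp
  · rw [opDP_big h, opDPt_big (show X.bdeg < m + n by omega)]
    simp

lemma termI1 (Λ Ω : SuperPartition) (n : ℕ) :
    spF (u1 Λ n) (pUnit Ω) = spF (pUnit Λ) (u1 Ω n) := by
  unfold u1
  rw [spF_smul_left, spF_smul_right, pair1b n]

lemma termI3 (Λ Ω : SuperPartition) (m n : ℕ) (hn : 0 < n) :
    spF (u3 Λ m n) (pUnit Ω) = spF (pUnit Λ) (u3 Ω m n) := by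
  have hn' : ((n : F)) ≠ 0 := Nat.cast_ne_zero.mpr hn.ne'
  unfold u3
  rw [spF_add_left, spF_smul_left, spF_smul_left, pairI3 m n hn,
    pairI3' m n hn, spF_add_right, spF_smul_right, spF_smul_right]
  field_simp [beta_ne, hn']
  ring

lemma termI2 (Λ Ω : SuperPartition) (A : Finset ℕ) :
    (∑ m ∈ A, ∑ n ∈ A, spF (u2 Λ m n) (pUnit Ω))
      = ∑ m ∈ A, ∑ n ∈ A, spF (pUnit Λ) (u2 Ω m n) := by
  have step1 : (∑ m ∈ A, ∑ n ∈ A, spF (u2 Λ m n) (pUnit Ω))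
      = ∑ m ∈ A, ∑ n ∈ A, spF (pUnit Λ) (u2 Ω n m) :=
    Finset.sum_congr rfl (fun m _ => Finset.sum_congr rfl (fun n _ => by
      unfold u2
      exact pairI2 m n (pUnit Λ) (pUnit Ω)))
  rw [step1, Finset.sum_comm]

lemma I_basis (Λ Ω : SuperPartition) :
    spF (Iop9 (pUnit Λ)) (pUnit Ω) = spF (pUnit Λ) (Iop9 (pUnit Ω)) := by
  have hsubL : Finset.range (Λ.bdeg + 1) ⊆ Finset.range (max Λ.bdeg Ω.bdeg + 1) :=
    Finset.range_subset_range.mpr (by omega)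
  have hsubR : Finset.range (Ω.bdeg + 1) ⊆ Finset.range (max Λ.bdeg Ω.bdeg + 1) :=
    Finset.range_subset_range.mpr (by omega)
  have hsubL' : Finset.Icc 1 Λ.bdeg ⊆ Finset.Icc 1 (max Λ.bdeg Ω.bdeg) :=
    Finset.Icc_subset_Icc_right (le_max_left _ _)
  have hsubR' : Finset.Icc 1 Ω.bdeg ⊆ Finset.Icc 1 (max Λ.bdeg Ω.bdeg) :=
    Finset.Icc_subset_Icc_right (le_max_right _ _)
  rw [Iop9_pU, Iop9_pU]
  simp only [spF_add_left, spF_smul_left, spF_sum_left, spF_add_right,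
    spF_smul_right, spF_sum_right]
  rw [Finset.sum_subset hsubL (fun n hn hn2 => by
    have h : Λ.bdeg < n := by
      simp only [Finset.mem_range] at hn hn2
      omega
    rw [u1_zero h, spF_zero_left])]
  rw [sum2_subset hsubL hsubL (fun m n hm hn h => by
    have h' : Λ.bdeg < m ∨ Λ.bdeg < n := by
      simp only [Finset.mem_range] at hm hn h
      omega
    rw [u2_zero h', spF_zero_left])]
  rw [sum2_subset hsubL hsubL' (fun m n hm hn h => by
    have h' : Λ.bdeg < m ∨ Λ.bdeg < n := by
      simp only [Finset.mem_range, Finset.mem_Icc] at hm hn h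
      omega
    rw [u3_zero h', spF_zero_left])]
  rw [Finset.sum_subset hsubR (fun n hn hn2 => by
    have h : Ω.bdeg < n := by
      simp only [Finset.mem_range] at hn hn2
      omega
    rw [u1_zero h, spF_zero_right])]
  rw [sum2_subset hsubR hsubR (fun m n hm hn h => by
    have h' : Ω.bdeg < m ∨ Ω.bdeg < n := by
      simp only [Finset.mem_range] at hm hn h
      omega
    rw [u2_zero h', spF_zero_right])]
  rw [sum2_subset hsubR hsubR' (fun m n hm hn h => by
    have h' : Ω.bdeg < m ∨ Ω.bdeg < n := by
      simp only [Finset.mem_range, Finset.mem_Icc] at hm hn h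
      omega
    rw [u3_zero h', spF_zero_right])]
  have c1 : ∑ n ∈ Finset.range (max Λ.bdeg Ω.bdeg + 1), spF (u1 Λ n) (pUnit Ω)
      = ∑ n ∈ Finset.range (max Λ.bdeg Ω.bdeg + 1), spF (pUnit Λ) (u1 Ω n) :=
    Finset.sum_congr rfl (fun n _ => termI1 Λ Ω n)
  have c2 := termI2 Λ Ω (Finset.range (max Λ.bdeg Ω.bdeg + 1))
  have c3 : ∑ m ∈ Finset.range (max Λ.bdeg Ω.bdeg + 1),
        ∑ n ∈ Finset.Icc 1 (max Λ.bdeg Ω.bdeg), spF (u3 Λ m n) (pUnit Ω)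
      = ∑ m ∈ Finset.range (max Λ.bdeg Ω.bdeg + 1),
        ∑ n ∈ Finset.Icc 1 (max Λ.bdeg Ω.bdeg), spF (pUnit Λ) (u3 Ω m n) :=
    Finset.sum_congr rfl (fun m _ => Finset.sum_congr rfl (fun n hn =>
      termI3 Λ Ω m n (by simp only [Finset.mem_Icc] at hn; omega)))
  rw [c1, c2, c3]

lemma I_main (f g : PS) : spF (Iop9 f) g = spF f (Iop9 g) :=
  adj_of_basis I_basis f g

end Stmt9

theorem statement9 (Ncst : F) :
    (∀ f g : PS, spF (Hop9 Ncst f) g = spF f (Hop9 Ncst g)) ∧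
    (∀ f g : PS, spF (Iop9 f) g = spF f (Iop9 g)) :=
  ⟨Stmt9.H_main Ncst, Stmt9.I_main⟩
end
end

section
/- Each Jack superpolynomial expands upper triangularly in the dual basis {g_Ω}: J_Λ = Σ_{Ω≥Λ} u_{ΛΩ}(β) g_Ω with u_{ΛΛ}(β) ≠ 0, the sum over superpartitions Ω greater than or equal to Λ in the Bruhat order. -/
/-!
Common framework for "Orthogonality of Jack polynomials in superspace"
(Desrosiers–Lapointe–Mathieu).

We work over the field `F = ℚ(β)` of rational functions in the parameter `β`.
Superpartitions are encoded as a finset `a` of (distinct) fermionic parts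
together with a multiset `s` of positive bosonic parts.
-/

noncomputable section

open scoped BigOperators

/-!
STATEMENT 15: Each Jack superpolynomial expands upper triangularly in the
dual basis `{g_Ω}` (the basis dual to the supermonomials for the
combinatorial scalar product): `J_Λ = ∑_{Ω ≥ Λ} u_{ΛΩ}(β) g_Ω` with
`u_{ΛΛ}(β) ≠ 0`, the sum over superpartitions `Ω ≥ Λ` in the Bruhat order.
-/
namespace StmtAux

open List Multiset

lemma sortD_sorted (M : Multiset ℕ) : (sortD M).Pairwise (fun a b => b ≤ a) := by
  have h := M.pairwise_sort (· ≤ ·)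
  exact List.pairwise_reverse.mpr h

lemma coe_sortD (M : Multiset ℕ) : ((sortD M : List ℕ) : Multiset ℕ) = M := by
  unfold sortD
  rw [← Multiset.coe_reverse, List.reverse_reverse, Multiset.sort_eq]

lemma length_sortD (M : Multiset ℕ) : (sortD M).length = Multiset.card M := by
  unfold sortD
  rw [List.length_reverse, Multiset.length_sort]

lemma sum_sortD (M : Multiset ℕ) : (sortD M).sum = M.sum := by
  conv_rhs => rw [← coe_sortD M]
  simp

lemma psum_le_sum (M : Multiset ℕ) (k : ℕ) : psum M k ≤ M.sum := by
  unfold psum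
  calc ((sortD M).take k).sum ≤ ((sortD M).take k).sum + ((sortD M).drop k).sum := Nat.le_add_right _ _
  _ = (sortD M).sum := List.sum_take_add_sum_drop _ _
  _ = M.sum := StmtAux.sum_sortD M

lemma psum_eq_sum (M : Multiset ℕ) (k : ℕ) (h : Multiset.card M ≤ k) : psum M k = M.sum := by
  unfold psum
  rw [List.take_of_length_le (by rw [StmtAux.length_sortD]; exact h), StmtAux.sum_sortD]

lemma psum_succ (M : Multiset ℕ) (k : ℕ) : psum M (k + 1) = psum M k + (sortD M).getD k 0 := by
  unfold psum
  cases h : (sortD M)[k]? with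
  | none => simp [List.take_succ, h, List.getD]
  | some v => simp [List.take_succ, h, List.getD]

lemma sortD_decomp (M : Multiset ℕ) :
    sortD M = sortD (stripZ M) ++ List.replicate (Multiset.count 0 M) 0 := by
  haveI : IsAntisymm ℕ (fun a b => b ≤ a) := ⟨fun a b h1 h2 => le_antisymm h2 h1⟩
  refine (fun hp h1 h2 => List.Perm.eq_of_pairwise' (r := fun a b : ℕ => b ≤ a) h1 h2 hp) ?_ ?_ ?_
  · rw [← Multiset.coe_eq_coe, ← Multiset.coe_add, StmtAux.coe_sortD,
      StmtAux.coe_sortD, Multiset.coe_replicate]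
    conv_lhs => rw [← Multiset.filter_add_not (fun v => 0 < v) M]
    congr 1
    rw [Multiset.filter_congr (q := fun v => v = 0) (by intro x _; omega)]
    exact Multiset.filter_eq' M 0
  · exact StmtAux.sortD_sorted M
  · rw [List.pairwise_append]
    refine ⟨StmtAux.sortD_sorted _, ?_, ?_⟩
    · exact List.pairwise_replicate.mpr (by simp)
    · intro a _ b hb
      rw [List.eq_of_mem_replicate hb]
      exact Nat.zero_le a

lemma psum_stripZ (M : Multiset ℕ) (k : ℕ) : psum M k = psum (stripZ M) k := by
  conv_lhs => rw [psum, StmtAux.sortD_decomp M]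
  rw [List.take_append, List.sum_append, List.take_replicate,
    List.sum_replicate, smul_zero, add_zero]
  rfl

lemma map_range_getD (l : List ℕ) (B : ℕ) (h : l.length ≤ B) :
    (List.range B).map (fun k => l.getD k 0) = l ++ List.replicate (B - l.length) 0 := by
  apply List.ext_getElem
  · simp; omega
  · intro i h1 h2
    simp only [List.getElem_map, List.getElem_range]
    by_cases hi : i < l.length
    · rw [List.getElem_append_left hi, List.getD_eq_getElem l 0 hi]
    · rw [List.getElem_append_right (by omega), List.getElem_replicate,
        List.getD_eq_default l 0 (by omega)]

lemma stripZ_rep (M : Multiset ℕ) (B : ℕ) (h : Multiset.card M ≤ B) :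
    stripZ M =
      ((((List.range B).map fun k => (sortD M).getD k 0).filter
        (fun v => decide (0 < v)) : List ℕ) : Multiset ℕ) := by
  rw [StmtAux.map_range_getD _ B (by rw [StmtAux.length_sortD]; exact h), List.filter_append]
  have h2 : (List.replicate (B - (sortD M).length) 0).filter (fun v : ℕ => decide (0 < v)) = [] := by
    simp
  rw [h2, List.append_nil]
  conv_lhs => rw [stripZ, ← StmtAux.coe_sortD M]
  simp [Multiset.filter_coe]

lemma stripZ_eq_of_psum {M N : Multiset ℕ} (h : ∀ k, psum M k = psum N k) :
    stripZ M = stripZ N := by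
  have hg : ∀ k, (sortD M).getD k 0 = (sortD N).getD k 0 := by
    intro k
    have h1 := StmtAux.psum_succ M k
    have h2 := StmtAux.psum_succ N k
    have h3 := h k; have h4 := h (k+1)
    omega
  rw [StmtAux.stripZ_rep M (max (Multiset.card M) (Multiset.card N)) (le_max_left _ _),
    StmtAux.stripZ_rep N (max (Multiset.card M) (Multiset.card N)) (le_max_right _ _)]
  rw [show (fun k => (sortD M).getD k 0) = fun k => (sortD N).getD k 0 from funext hg]

lemma card_le_sum_pos (s : Multiset ℕ) (h : ∀ v ∈ s, 0 < v) : Multiset.card s ≤ s.sum := by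
  induction s using Multiset.induction_on with
  | empty => simp
  | cons a s ih =>
    simp only [Multiset.card_cons, Multiset.sum_cons]
    have h1 : 0 < a := h a (Multiset.mem_cons_self a s)
    have h2 := ih (fun v hv => h v (Multiset.mem_cons_of_mem hv))
    omega

lemma finset_sum_eq_val_sum (a : Finset ℕ) : (∑ k ∈ a, k) = a.val.sum := by
  show (a.val.map (fun k => k)).sum = a.val.sum
  rw [Multiset.map_id']

lemma star_sum (Ω : SuperPartition) : Ω.star.sum = Ω.bdeg := by
  rw [SuperPartition.star, Multiset.sum_add, SuperPartition.bdeg, StmtAux.finset_sum_eq_val_sum]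

lemma map_add_one_sum (m : Multiset ℕ) : (m.map (· + 1)).sum = m.sum + Multiset.card m := by
  induction m using Multiset.induction_on with
  | empty => simp
  | cons a s ih => simp [ih]; omega

lemma circ_sum (Ω : SuperPartition) : Ω.circ.sum = Ω.bdeg + Ω.fdeg := by
  rw [SuperPartition.circ, Multiset.sum_add, StmtAux.map_add_one_sum, SuperPartition.bdeg,
    SuperPartition.fdeg, StmtAux.finset_sum_eq_val_sum, Finset.card]
  omega

lemma card_s_le (Ω : SuperPartition) : Multiset.card Ω.s ≤ Ω.bdeg := by
  have h1 := StmtAux.card_le_sum_pos Ω.s Ω.hs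
  have : Ω.s.sum ≤ Ω.bdeg := by rw [SuperPartition.bdeg]; omega
  omega

lemma card_star_le (Ω : SuperPartition) : Multiset.card Ω.star ≤ Ω.fdeg + Ω.bdeg := by
  rw [SuperPartition.star, Multiset.card_add, SuperPartition.fdeg, Finset.card]
  have := StmtAux.card_s_le Ω
  omega

lemma card_circ_le (Ω : SuperPartition) : Multiset.card Ω.circ ≤ Ω.fdeg + Ω.bdeg := by
  rw [SuperPartition.circ, Multiset.card_add, Multiset.card_map, SuperPartition.fdeg, Finset.card]
  have := StmtAux.card_s_le Ω
  omega

lemma circ_pos (Ω : SuperPartition) : ∀ v ∈ Ω.circ, 0 < v := by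
  intro v hv
  rcases Multiset.mem_add.mp hv with h | h
  · obtain ⟨w, _, rfl⟩ := Multiset.mem_map.mp h
    omega
  · exact Ω.hs v h

lemma stripZ_circ (Ω : SuperPartition) : stripZ Ω.circ = Ω.circ :=
  Multiset.filter_eq_self.mpr (StmtAux.circ_pos Ω)

lemma filter_card_split (m : Multiset ℕ) (hn : m.Nodup) (v : ℕ) :
    Multiset.card (m.filter (fun w => v ≤ w)) =
      Multiset.card (m.filter (fun w => v + 1 ≤ w)) + (if v ∈ m then 1 else 0) := by
  rw [Multiset.filter_congr (q := fun w => v + 1 ≤ w ∨ w = v) (by intro x _; constructor <;> omega)]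
  have h0 : m.filter (fun w => (v + 1 ≤ w) ∧ w = v) = 0 := by
    rw [Multiset.filter_eq_nil]
    intro w _ hw
    omega
  have hsp := Multiset.filter_add_filter (fun w => v + 1 ≤ w) (fun w => w = v) (s := m)
  rw [h0, add_zero] at hsp
  rw [← hsp, Multiset.card_add, Multiset.filter_eq', Multiset.card_replicate]
  congr 1
  by_cases h : v ∈ m
  · rw [Multiset.count_eq_one_of_mem hn h, if_pos h]
  · rw [Multiset.count_eq_zero_of_notMem h, if_neg h]

lemma mem_a_iff (Ω : SuperPartition) (v : ℕ) :
    v ∈ Ω.a ↔ Multiset.card (Ω.circ.filter (fun w => v + 1 ≤ w)) ≠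
      Multiset.card (Ω.star.filter (fun w => v + 1 ≤ w)) := by
  rw [SuperPartition.circ, SuperPartition.star, Multiset.filter_add, Multiset.filter_add,
    Multiset.card_add, Multiset.card_add]
  have h1 : (Ω.a.val.map (· + 1)).filter (fun w => v + 1 ≤ w)
      = (Ω.a.val.filter (fun w => v ≤ w)).map (· + 1) := by
    rw [Multiset.filter_map]
    congr 1
    apply Multiset.filter_congr
    intro x _
    simp
  rw [h1, Multiset.card_map, StmtAux.filter_card_split Ω.a.val Ω.a.nodup v]
  have : v ∈ Ω.a ↔ v ∈ Ω.a.val := Iff.rfl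
  by_cases h : v ∈ Ω.a
  · simp [h, this.mp h]
  · simp [h, fun hh => h (this.mpr hh)]

lemma eq_of_star_circ {Ω Λ : SuperPartition} (hs : Ω.star = Λ.star) (hc : Ω.circ = Λ.circ) :
    Ω = Λ := by
  have ha : Ω.a = Λ.a := by
    apply Finset.ext
    intro v
    rw [StmtAux.mem_a_iff, StmtAux.mem_a_iff, hs, hc]
  have hss : Ω.s = Λ.s := by
    have h := hs
    rw [SuperPartition.star, SuperPartition.star, ha] at h
    exact (add_right_inj _).mp h
  obtain ⟨a1, s1, h1⟩ := Ω
  obtain ⟨a2, s2, h2⟩ := Λ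
  simp only at ha hss
  subst ha hss
  rfl

lemma psum_congr_stripZ {M N : Multiset ℕ} (h : stripZ M = stripZ N) (k : ℕ) :
    psum M k = psum N k := by
  rw [StmtAux.psum_stripZ M, StmtAux.psum_stripZ N, h]

lemma domLE_refl (M : Multiset ℕ) : domLE M M := ⟨rfl, fun _ => le_rfl⟩

lemma domLE_trans {A B C : Multiset ℕ} (h1 : domLE A B) (h2 : domLE B C) : domLE A C :=
  ⟨h1.1.trans h2.1, fun k => (h1.2 k).trans (h2.2 k)⟩

lemma domLT_trans_left {A B C : Multiset ℕ} (h1 : domLT A B) (h2 : domLE B C) : domLT A C := by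
  refine ⟨StmtAux.domLE_trans h1.1 h2, ?_⟩
  intro hAC
  apply h1.2
  apply StmtAux.stripZ_eq_of_psum
  intro k
  have hk := StmtAux.psum_congr_stripZ hAC k
  have := h1.1.2 k
  have := h2.2 k
  omega

lemma domLT_trans_right {A B C : Multiset ℕ} (h1 : domLE A B) (h2 : domLT B C) : domLT A C := by
  refine ⟨StmtAux.domLE_trans h1 h2.1, ?_⟩
  intro hAC
  apply h2.2
  apply StmtAux.stripZ_eq_of_psum
  intro k
  have hk := StmtAux.psum_congr_stripZ hAC k
  have := h1.2 k
  have := h2.1.2 k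
  omega

lemma bruhatLE_refl (Λ : SuperPartition) : bruhatLE Λ Λ :=
  ⟨rfl, rfl, Or.inr ⟨rfl, StmtAux.domLE_refl _⟩⟩

lemma bruhatLE_trans {A B C : SuperPartition} (h1 : bruhatLE A B) (h2 : bruhatLE B C) :
    bruhatLE A C := by
  refine ⟨h1.1.trans h2.1, h1.2.1.trans h2.2.1, ?_⟩
  rcases h1.2.2 with hd1 | ⟨he1, hc1⟩
  · rcases h2.2.2 with hd2 | ⟨he2, hc2⟩
    · exact Or.inl (StmtAux.domLT_trans_left hd1 hd2.1)
    · exact Or.inl (he2 ▸ hd1)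
  · rcases h2.2.2 with hd2 | ⟨he2, hc2⟩
    · exact Or.inl (he1 ▸ hd2)
    · exact Or.inr ⟨he1.trans he2, StmtAux.domLE_trans hc1 hc2⟩

lemma bruhatLE_antisymm {A B : SuperPartition} (h1 : bruhatLE A B) (h2 : bruhatLE B A) :
    A = B := by
  rcases h1.2.2 with hd1 | ⟨he1, hc1⟩
  · exfalso
    rcases h2.2.2 with hd2 | ⟨he2, hc2⟩
    · exact hd1.2 (StmtAux.stripZ_eq_of_psum fun k => le_antisymm (hd1.1.2 k) (hd2.1.2 k))
    · exact hd1.2 (by rw [he2])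
  · rcases h2.2.2 with hd2 | ⟨he2, hc2⟩
    · exact absurd (by rw [he1]) hd2.2
    · have hcirc : A.circ = B.circ := by
        rw [← StmtAux.stripZ_circ A, ← StmtAux.stripZ_circ B]
        exact StmtAux.stripZ_eq_of_psum fun k => le_antisymm (hc1.2 k) (hc2.2 k)
      exact StmtAux.eq_of_star_circ he1 hcirc

/-- A rank function strictly decreasing along the strict Bruhat order. -/
def srank (Ω : SuperPartition) : ℕ :=
  (∑ k ∈ Finset.range (Ω.fdeg + Ω.bdeg + 1), psum Ω.star k) *
      ((Ω.fdeg + Ω.bdeg + 1) * (Ω.fdeg + Ω.bdeg) + 1) +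
    (∑ k ∈ Finset.range (Ω.fdeg + Ω.bdeg + 1), psum Ω.circ k)

lemma srank_lt {Ω Λ : SuperPartition} (h : bruhatLT Ω Λ) : srank Ω < srank Λ := by
  obtain ⟨⟨hf, hb, hcase⟩, hne⟩ := h
  set E := Λ.fdeg + Λ.bdeg with hE
  have hEΩ : Ω.fdeg + Ω.bdeg = E := by omega
  rcases hcase with ⟨hdom, hstrict⟩ | ⟨hstar, hcirc⟩
  · -- strict dominance on stars
    have hstr : ∃ k ∈ Finset.range (E + 1), psum Ω.star k < psum Λ.star k := by
      by_contra hc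
      push_neg at hc
      apply hstrict
      apply StmtAux.stripZ_eq_of_psum
      intro k
      by_cases hk : k ≤ E
      · exact le_antisymm (hdom.2 k) (hc k (Finset.mem_range.mpr (by omega)))
      · rw [StmtAux.psum_eq_sum Ω.star k (by have := StmtAux.card_star_le Ω; omega),
          StmtAux.psum_eq_sum Λ.star k (by have := StmtAux.card_star_le Λ; omega), hdom.1]
    obtain ⟨k0, hk0, hk0'⟩ := hstr
    have h1 : (∑ k ∈ Finset.range (E + 1), psum Ω.star k) <
        ∑ k ∈ Finset.range (E + 1), psum Λ.star k :=
      Finset.sum_lt_sum (fun k _ => hdom.2 k) ⟨k0, hk0, hk0'⟩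
    have h2 : (∑ k ∈ Finset.range (E + 1), psum Ω.circ k) ≤ (E + 1) * E := by
      calc (∑ k ∈ Finset.range (E + 1), psum Ω.circ k)
          ≤ ∑ _k ∈ Finset.range (E + 1), E := by
            apply Finset.sum_le_sum
            intro k _
            have := StmtAux.psum_le_sum Ω.circ k
            have := StmtAux.circ_sum Ω
            omega
        _ = (E + 1) * E := by rw [Finset.sum_const, Finset.card_range, smul_eq_mul]
    rw [srank, srank, hEΩ, ← hE]
    set BIG := (E + 1) * E + 1 with hBIG
    calc (∑ k ∈ Finset.range (E + 1), psum Ω.star k) * BIG +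
          (∑ k ∈ Finset.range (E + 1), psum Ω.circ k)
        < ((∑ k ∈ Finset.range (E + 1), psum Ω.star k) + 1) * BIG := by
          rw [add_one_mul]
          omega
      _ ≤ (∑ k ∈ Finset.range (E + 1), psum Λ.star k) * BIG :=
          Nat.mul_le_mul_right _ (by omega)
      _ ≤ _ := Nat.le_add_right _ _
  · -- stars equal, circles strictly dominated
    have hcne : Ω.circ ≠ Λ.circ := fun hcc => hne (StmtAux.eq_of_star_circ hstar hcc)
    have hstr : ∃ k ∈ Finset.range (E + 1), psum Ω.circ k < psum Λ.circ k := by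
      by_contra hc
      push_neg at hc
      apply hcne
      rw [← StmtAux.stripZ_circ Ω, ← StmtAux.stripZ_circ Λ]
      apply StmtAux.stripZ_eq_of_psum
      intro k
      by_cases hk : k ≤ E
      · exact le_antisymm (hcirc.2 k) (hc k (Finset.mem_range.mpr (by omega)))
      · rw [StmtAux.psum_eq_sum Ω.circ k (by have := StmtAux.card_circ_le Ω; omega),
          StmtAux.psum_eq_sum Λ.circ k (by have := StmtAux.card_circ_le Λ; omega), hcirc.1]
    obtain ⟨k0, hk0, hk0'⟩ := hstr
    have h1 : (∑ k ∈ Finset.range (E + 1), psum Ω.circ k) <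
        ∑ k ∈ Finset.range (E + 1), psum Λ.circ k :=
      Finset.sum_lt_sum (fun k _ => hcirc.2 k) ⟨k0, hk0, hk0'⟩
    rw [srank, srank, hEΩ, ← hE, hstar]
    omega

/-! ### Scalar product machinery -/

/-- The weight `(−1)^{m(m−1)/2} z_Λ(γ)`. -/
def wgt (γ : F) (Λ : SuperPartition) : F := Λ.sgn * Λ.zgen γ

lemma sgn_sq (Λ : SuperPartition) : Λ.sgn * Λ.sgn = 1 := by
  rw [SuperPartition.sgn, ← pow_add, ← two_mul, pow_mul, neg_one_sq, one_pow]

lemma sgn_ne_zero (Λ : SuperPartition) : Λ.sgn ≠ 0 := by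
  intro h
  have := StmtAux.sgn_sq Λ
  rw [h, mul_zero] at this
  exact absurd this.symm (one_ne_zero)

instance : CharZero F :=
  charZero_of_injective_algebraMap (RatFunc.algebraMap_injective ℚ)

lemma wgt_ne_zero (Λ : SuperPartition) : wgt βp Λ ≠ 0 := by
  apply mul_ne_zero (StmtAux.sgn_ne_zero Λ)
  rw [SuperPartition.zgen]
  apply mul_ne_zero
  · exact pow_ne_zero _ (inv_ne_zero RatFunc.X_ne_zero)
  · rw [Nat.cast_ne_zero, SuperPartition.zs]
    have h1 : 0 < Λ.s.prod := Multiset.prod_pos Λ.hs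
    have h2 : 0 < Λ.nfact := Finset.prod_pos fun i _ => Nat.factorial_pos _
    positivity

section SPAux

variable {P : Type} [AddCommGroup P] [Module F P]

/-- `spGen` as a linear map in its first argument. -/
def spL (pB : Module.Basis SuperPartition F P) (γ : F) (g : P) : P →ₗ[F] F :=
  (Finsupp.linearCombination F fun Λ => (pB.repr g) Λ * wgt γ Λ).comp
    (pB.repr : P ≃ₗ[F] (SuperPartition →₀ F)).toLinearMap

lemma spGen_eq_spL (pB : Module.Basis SuperPartition F P) (γ : F) (f g : P) :
    spGen pB γ f g = spL pB γ g f := by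
  rw [spL, LinearMap.comp_apply, LinearEquiv.coe_toLinearMap, Finsupp.linearCombination_apply,
    spGen]
  apply Finsupp.sum_congr
  intro Λ _
  rw [smul_eq_mul, wgt, mul_assoc]

lemma spGen_symm (pB : Module.Basis SuperPartition F P) (γ : F) (f g : P) :
    spGen pB γ f g = spGen pB γ g f := by
  have key : ∀ p q : SuperPartition →₀ F,
      (p.sum fun Λ c => c * q Λ * (Λ.sgn * Λ.zgen γ)) =
        ∑ Λ ∈ p.support ∩ q.support, p Λ * q Λ * (Λ.sgn * Λ.zgen γ) := by
    intro p q
    rw [Finsupp.sum]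
    symm
    apply Finset.sum_subset Finset.inter_subset_left
    intro Λ h1 h2
    have : q Λ = 0 := by
      by_contra hq
      exact h2 (Finset.mem_inter.mpr ⟨h1, Finsupp.mem_support_iff.mpr hq⟩)
    rw [this, mul_zero, zero_mul]
  rw [spGen, spGen, key, key, Finset.inter_comm]
  apply Finset.sum_congr rfl
  intros
  ring

lemma spGen_basis_right (pB : Module.Basis SuperPartition F P) (γ : F) (f : P) (Sg : SuperPartition) :
    spGen pB γ f (pB Sg) = (pB.repr f) Sg * wgt γ Sg := by
  rw [StmtAux.spGen_symm, spGen_eq_spL, spL, LinearMap.comp_apply, LinearEquiv.coe_toLinearMap,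
    Module.Basis.repr_self, Finsupp.linearCombination_single, one_smul]

lemma eq_zero_of_sp_mB_zero (pB mB : Module.Basis SuperPartition F P) (f : P)
    (h : ∀ Ω, spGen pB βp f (mB Ω) = 0) : f = 0 := by
  have h2 : ∀ Sg : SuperPartition, spGen pB βp f (pB Sg) = 0 := by
    intro Sg
    rw [StmtAux.spGen_symm, spGen_eq_spL]
    have hrep : pB Sg = Finsupp.sum (mB.repr (pB Sg)) fun Ω c => c • mB Ω := by
      conv_lhs => rw [← mB.linearCombination_repr (pB Sg), Finsupp.linearCombination_apply]
    rw [hrep, map_finsuppSum]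
    rw [Finsupp.sum]
    apply Finset.sum_eq_zero
    intro Ω _
    rw [LinearMap.map_smul, ← spGen_eq_spL, StmtAux.spGen_symm, h Ω, smul_zero]
  have h3 : ∀ Sg, (pB.repr f) Sg = 0 := by
    intro Sg
    have := h2 Sg
    rw [StmtAux.spGen_basis_right] at this
    exact (mul_eq_zero.mp this).resolve_right (StmtAux.wgt_ne_zero Sg)
  have : pB.repr f = 0 := Finsupp.ext h3
  simpa using congrArg pB.repr.symm this

end SPAux

section SpanAux

variable {P : Type} [AddCommGroup P] [Module F P]

lemma mB_mem_span (mB : Module.Basis SuperPartition F P) (J : SuperPartition → P)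
    (hJtri : IsMonicTriangular mB J) (Ω : SuperPartition) :
    mB Ω ∈ Submodule.span F {v | ∃ Ψ, bruhatLE Ψ Ω ∧ v = J Ψ} := by
  suffices h : ∀ n (Ω : SuperPartition), StmtAux.srank Ω < n →
      mB Ω ∈ Submodule.span F {v | ∃ Ψ, bruhatLE Ψ Ω ∧ v = J Ψ} from
    h (StmtAux.srank Ω + 1) Ω (Nat.lt_succ_self _)
  intro n
  induction n with
  | zero => intro Ω h; omega
  | succ n ih =>
    intro Ω hΩ
    set p := mB.repr (J Ω) with hp
    have hrep : J Ω = ∑ Ψ ∈ p.support, p Ψ • mB Ψ := by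
      conv_lhs => rw [← mB.linearCombination_repr (J Ω), Finsupp.linearCombination_apply,
        Finsupp.sum]
    have hΩmem : Ω ∈ p.support :=
      Finsupp.mem_support_iff.mpr (by rw [hp, (hJtri Ω).1]; exact one_ne_zero)
    have h2 : (∑ Ψ ∈ p.support, p Ψ • mB Ψ)
        = mB Ω + ∑ Ψ ∈ p.support.erase Ω, p Ψ • mB Ψ := by
      rw [← Finset.add_sum_erase _ _ hΩmem, hp, (hJtri Ω).1, one_smul]
    have hsplit : mB Ω = J Ω - ∑ Ψ ∈ p.support.erase Ω, p Ψ • mB Ψ := by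
      rw [hrep, h2]
      abel
    rw [hsplit]
    apply Submodule.sub_mem
    · exact Submodule.subset_span ⟨Ω, StmtAux.bruhatLE_refl Ω, rfl⟩
    · apply Submodule.sum_mem
      intro Ψ hΨ
      apply Submodule.smul_mem
      have hΨne : Ψ ≠ Ω := (Finset.mem_erase.mp hΨ).1
      have hΨsupp : p Ψ ≠ 0 :=
        Finsupp.mem_support_iff.mp (Finset.mem_erase.mp hΨ).2
      rw [hp] at hΨsupp
      have hlt : bruhatLT Ψ Ω := ((hJtri Ω).2 Ψ hΨsupp).resolve_left hΨne
      have h1 := ih Ψ (by have := StmtAux.srank_lt hlt; omega)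
      exact Submodule.span_mono
        (fun v hv => by
          obtain ⟨Θ, hΘ, hveq⟩ := hv
          exact ⟨Θ, StmtAux.bruhatLE_trans hΘ hlt.1, hveq⟩) h1

end SpanAux

lemma class_finite (m n : ℕ) :
    {Ω : SuperPartition | Ω.fdeg = m ∧ Ω.bdeg = n}.Finite := by
  have hinj : Function.Injective (fun Ω : SuperPartition => (Ω.a, Ω.s)) := by
    intro A B h
    obtain ⟨a1, s1, h1⟩ := A
    obtain ⟨a2, s2, h2⟩ := B
    simp only [Prod.mk.injEq] at h
    obtain ⟨rfl, rfl⟩ := h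
    rfl
  set M0 : Multiset ℕ := (n + 1) • (Multiset.range (n + 1)) with hM0
  have hfinT : (↑((Finset.range (n + 1)).powerset) ×ˢ ↑(M0.powerset.toFinset) :
      Set (Finset ℕ × Multiset ℕ)).Finite :=
    Set.Finite.prod (Finset.finite_toSet _) (Finset.finite_toSet _)
  apply Set.Finite.subset (hfinT.preimage hinj.injOn)
  intro Ω hΩ
  obtain ⟨hm, hn⟩ := hΩ
  have hsum_a : (∑ k ∈ Ω.a, k) ≤ n := by
    rw [← hn, SuperPartition.bdeg]; omega
  have hsum_s : Ω.s.sum ≤ n := by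
    rw [← hn, SuperPartition.bdeg]; omega
  constructor
  · show Ω.a ∈ ((Finset.range (n + 1)).powerset : Finset (Finset ℕ))
    rw [Finset.mem_powerset]
    intro k hk
    rw [Finset.mem_range]
    have h3 : k ≤ ∑ i ∈ Ω.a, i := Finset.single_le_sum (fun i _ => Nat.zero_le i) hk
    omega
  · show Ω.s ∈ M0.powerset.toFinset
    rw [Multiset.mem_toFinset, Multiset.mem_powerset, Multiset.le_iff_count]
    intro v
    rw [hM0, Multiset.count_nsmul]
    by_cases hv : v < n + 1
    · rw [Multiset.count_eq_one_of_mem (Multiset.nodup_range _) (Multiset.mem_range.mpr hv),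
        mul_one]
      have h1 := Multiset.count_le_card v Ω.s
      have h2 := StmtAux.card_le_sum_pos Ω.s Ω.hs
      omega
    · have hnm : v ∉ Multiset.range (n + 1) := by rw [Multiset.mem_range]; omega
      rw [Multiset.count_eq_zero_of_notMem hnm, mul_zero,
        Nat.le_zero, Multiset.count_eq_zero]
      intro hv'
      have h1 : v ≤ Ω.s.sum := Multiset.single_le_sum (fun x _ => Nat.zero_le x) v hv'
      omega

end StmtAux

theorem statement15
    (P : Type) [Ring P] [Algebra F P]
    (mB pB : Module.Basis SuperPartition F P)
    (hone : pB SuperPartition.empty = 1)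
    (hmul : ∀ Λ, pB Λ = prodRows (fun n => pB (bRow n)) (fun k => pB (fRow k)) Λ)
    (hmpB : ∀ n, 1 ≤ n → pB (bRow n) = mB (bRow n))
    (hmpF : ∀ k, pB (fRow k) = mB (fRow k))
    (hhom : ∀ Λ Ω, (pB.repr (mB Λ)) Ω ≠ 0 → Ω.bdeg = Λ.bdeg ∧ Ω.fdeg = Λ.fdeg)
    (gB : SuperPartition → P)
    (hgdual : ∀ Λ Ω : SuperPartition,
      Λ.sgn * spGen pB βp (gB Λ) (mB Ω) = if Λ = Ω then 1 else 0)
    (J : SuperPartition → P)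
    (hJtri : IsMonicTriangular mB J)
    (hJorth : ∀ Λ Ω : SuperPartition, Λ ≠ Ω → spGen pB βp (J Λ) (J Ω) = 0) :
    ∀ Λ : SuperPartition, ∃ u : SuperPartition →₀ F,
      (∀ Ω ∈ u.support, bruhatLE Λ Ω) ∧ u Λ ≠ 0 ∧
      J Λ = u.sum fun Ω r => r • gB Ω := by
  classical
  intro Λ
  have expand : ∀ v : P, spGen pB βp (J Λ) v = StmtAux.spL pB βp (J Λ) v := by
    intro v
    rw [StmtAux.spGen_symm, StmtAux.spGen_eq_spL]
  -- key: nonvanishing against m_Ω forces Λ ≤ Ω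
  have key : ∀ Ω, spGen pB βp (J Λ) (mB Ω) ≠ 0 → bruhatLE Λ Ω := by
    intro Ω hne
    by_contra hnot
    apply hne
    have hmem := StmtAux.mB_mem_span mB J hJtri Ω
    have hker : {v | ∃ Ψ, bruhatLE Ψ Ω ∧ v = J Ψ} ⊆
        (LinearMap.ker (StmtAux.spL pB βp (J Λ)) : Set P) := by
      rintro v ⟨Ψ, hΨ, rfl⟩
      have hΨΛ : Ψ ≠ Λ := fun h => hnot (h ▸ hΨ)
      simp only [SetLike.mem_coe, LinearMap.mem_ker]
      rw [← expand]
      exact hJorth Λ Ψ (fun h => hΨΛ h.symm)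
    have h2 := Submodule.span_le.mpr hker hmem
    rw [LinearMap.mem_ker] at h2
    rw [expand]
    exact h2
  -- ⟨J_Λ, J_Λ⟩ ≠ 0
  have hJJ : spGen pB βp (J Λ) (J Λ) ≠ 0 := by
    intro h0
    have horthall : ∀ Ψ, spGen pB βp (J Λ) (J Ψ) = 0 := by
      intro Ψ
      by_cases h : Λ = Ψ
      · rw [← h]; exact h0
      · exact hJorth Λ Ψ h
    have hzero : ∀ Ω, spGen pB βp (J Λ) (mB Ω) = 0 := by
      intro Ω
      have hmem := StmtAux.mB_mem_span mB J hJtri Ω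
      have hker : {v | ∃ Ψ, bruhatLE Ψ Ω ∧ v = J Ψ} ⊆
          (LinearMap.ker (StmtAux.spL pB βp (J Λ)) : Set P) := by
        rintro v ⟨Ψ, hΨ, rfl⟩
        simp only [SetLike.mem_coe, LinearMap.mem_ker]
        rw [← expand]
        exact horthall Ψ
      have h2 := Submodule.span_le.mpr hker hmem
      rw [LinearMap.mem_ker] at h2
      rw [expand]
      exact h2
    have hJ0 : J Λ = 0 := StmtAux.eq_zero_of_sp_mB_zero pB mB (J Λ) hzero
    have h1 := (hJtri Λ).1
    rw [hJ0] at h1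
    simp at h1
  -- vanishing strictly below Λ
  have hbelow : ∀ Ω, bruhatLT Ω Λ → spGen pB βp (J Λ) (mB Ω) = 0 := by
    intro Ω hΩ
    by_contra hne
    exact hΩ.2 (StmtAux.bruhatLE_antisymm hΩ.1 (key Ω hne))
  -- diagonal identity
  have hdiag : spGen pB βp (J Λ) (mB Λ) = spGen pB βp (J Λ) (J Λ) := by
    set p := mB.repr (J Λ) with hp
    have hrep : J Λ = ∑ Ψ ∈ p.support, p Ψ • mB Ψ := by
      conv_lhs => rw [← mB.linearCombination_repr (J Λ), Finsupp.linearCombination_apply,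
        Finsupp.sum]
    have hΛmem : Λ ∈ p.support :=
      Finsupp.mem_support_iff.mpr (by rw [hp, (hJtri Λ).1]; exact one_ne_zero)
    have hstep : StmtAux.spL pB βp (J Λ) (∑ Ψ ∈ p.support, p Ψ • mB Ψ)
        = ∑ Ψ ∈ p.support, p Ψ * StmtAux.spL pB βp (J Λ) (mB Ψ) := by
      rw [map_sum]
      apply Finset.sum_congr rfl
      intro Ψ _
      rw [LinearMap.map_smul, smul_eq_mul]
    symm
    calc spGen pB βp (J Λ) (J Λ) = StmtAux.spL pB βp (J Λ) (J Λ) := expand _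
      _ = StmtAux.spL pB βp (J Λ) (∑ Ψ ∈ p.support, p Ψ • mB Ψ) :=
          congrArg (StmtAux.spL pB βp (J Λ)) hrep
      _ = ∑ Ψ ∈ p.support, p Ψ * StmtAux.spL pB βp (J Λ) (mB Ψ) := hstep
      _ = p Λ * StmtAux.spL pB βp (J Λ) (mB Λ) := by
          apply Finset.sum_eq_single Λ
          · intro Ψ hΨ hne
            have hΨsupp : p Ψ ≠ 0 := Finsupp.mem_support_iff.mp hΨ
            rw [hp] at hΨsupp
            have hlt : bruhatLT Ψ Λ := ((hJtri Λ).2 Ψ hΨsupp).resolve_left hne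
            rw [← expand, hbelow Ψ hlt, mul_zero]
          · intro h
            exact absurd hΛmem h
      _ = spGen pB βp (J Λ) (mB Λ) := by
          rw [hp, (hJtri Λ).1, one_mul, ← expand]
  -- the coefficient function
  have hfin := StmtAux.class_finite Λ.fdeg Λ.bdeg
  set coef : SuperPartition → F := fun Ω => Ω.sgn * spGen pB βp (J Λ) (mB Ω) with hcoefdef
  have hspne : ∀ Ω, coef Ω ≠ 0 → spGen pB βp (J Λ) (mB Ω) ≠ 0 := by
    intro Ω h h0
    apply h
    rw [hcoefdef]
    simp only
    rw [h0, mul_zero]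
  have hcsupp : ∀ Ω, coef Ω ≠ 0 → Ω ∈ hfin.toFinset := by
    intro Ω h
    have hle := key Ω (hspne Ω h)
    rw [Set.Finite.mem_toFinset]
    exact ⟨hle.1.symm, hle.2.1.symm⟩
  refine ⟨Finsupp.onFinset hfin.toFinset coef hcsupp, ?_, ?_, ?_⟩
  · intro Ω hΩ
    have h1 : coef Ω ≠ 0 := by
      rwa [Finsupp.mem_support_iff, Finsupp.onFinset_apply] at hΩ
    exact key Ω (hspne Ω h1)
  · rw [Finsupp.onFinset_apply]
    rw [hcoefdef]
    simp only
    rw [hdiag]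
    exact mul_ne_zero (StmtAux.sgn_ne_zero Λ) hJJ
  · set u : SuperPartition →₀ F := Finsupp.onFinset hfin.toFinset coef hcsupp with hu
    have huΩ : ∀ Ω, u Ω = Ω.sgn * spGen pB βp (J Λ) (mB Ω) := by
      intro Ω
      rw [hu, Finsupp.onFinset_apply]
    have hSP : ∀ Ω, spGen pB βp (J Λ - u.sum fun Ψ r => r • gB Ψ) (mB Ω) = 0 := by
      intro Ω
      rw [StmtAux.spGen_eq_spL, map_sub]
      have h1 : StmtAux.spL pB βp (mB Ω) (J Λ) = spGen pB βp (J Λ) (mB Ω) :=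
        (StmtAux.spGen_eq_spL pB βp (J Λ) (mB Ω)).symm
      have h2 : StmtAux.spL pB βp (mB Ω) (u.sum fun Ψ r => r • gB Ψ)
          = u Ω * Ω.sgn := by
        rw [map_finsuppSum, Finsupp.sum]
        rw [Finset.sum_eq_single Ω]
        · rw [LinearMap.map_smul, smul_eq_mul, ← StmtAux.spGen_eq_spL]
          have hval : spGen pB βp (gB Ω) (mB Ω) = Ω.sgn := by
            have hgd := hgdual Ω Ω
            rw [if_pos rfl] at hgd
            calc spGen pB βp (gB Ω) (mB Ω)
                = (Ω.sgn * Ω.sgn) * spGen pB βp (gB Ω) (mB Ω) := by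
                  rw [StmtAux.sgn_sq, one_mul]
              _ = Ω.sgn * (Ω.sgn * spGen pB βp (gB Ω) (mB Ω)) := by ring
              _ = Ω.sgn := by rw [hgd, mul_one]
          rw [hval]
        · intro Ψ _ hne
          rw [LinearMap.map_smul, smul_eq_mul, ← StmtAux.spGen_eq_spL]
          have hgd := hgdual Ψ Ω
          rw [if_neg hne] at hgd
          have hsp0 : spGen pB βp (gB Ψ) (mB Ω) = 0 :=
            (mul_eq_zero.mp hgd).resolve_left (StmtAux.sgn_ne_zero Ψ)
          rw [hsp0, mul_zero]
        · intro hΩn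
          rw [Finsupp.notMem_support_iff.mp hΩn, zero_smul, map_zero]
      rw [h1, h2, huΩ Ω, mul_comm (Ω.sgn) _, mul_assoc, StmtAux.sgn_sq, mul_one, sub_self]
    have hzero := StmtAux.eq_zero_of_sp_mB_zero pB mB _ hSP
    exact sub_eq_zero.mp hzero
end
end
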